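/- arXiv:1806.05902 — 5 statements merged into one kernel-verified Lean document; each statement's English description precedes it below -/
import Mathlib

section
/- For every integer n ≥ 5, the commutator subgroup SG_n' = [SG_n, SG_n] of the singular braid group SG_n is finitely generated (as a subgroup of SG_n). -/
namespace SingBraid

/-- The free-group generator word for `σ_{i+1}` (0-indexed `i`). -/
def σw (n : ℕ) (i : Fin (n-1)) : FreeGroup (Fin (n-1) ⊕ Fin (n-1)) := FreeGroup.of (Sum.inl i)

/-- The free-group generator word for `ρ_{i+1}` (0-indexed `i`). -/
def ρw (n : ℕ) (i : Fin (n-1)) : FreeGroup (Fin (n-1) ⊕ Fin (n-1)) := FreeGroup.of (Sum.inr i)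

/-- Defining relators of the singular braid group `SG_n`. -/
def sgRels (n : ℕ) : Set (FreeGroup (Fin (n-1) ⊕ Fin (n-1))) :=
  {r | ∃ i j : Fin (n-1), ((i:ℕ)+1 < (j:ℕ) ∨ (j:ℕ)+1 < (i:ℕ)) ∧
      r = σw n i * σw n j * (σw n i)⁻¹ * (σw n j)⁻¹} ∪
  {r | ∃ i j : Fin (n-1), (j:ℕ) = (i:ℕ)+1 ∧
      r = σw n i * σw n j * σw n i * (σw n j * σw n i * σw n j)⁻¹} ∪
  {r | ∃ i j : Fin (n-1), ((i:ℕ)+1 < (j:ℕ) ∨ (j:ℕ)+1 < (i:ℕ)) ∧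
      r = ρw n i * ρw n j * (ρw n i)⁻¹ * (ρw n j)⁻¹} ∪
  {r | ∃ i j : Fin (n-1), (j:ℕ) = (i:ℕ)+1 ∧
      r = ρw n i * σw n j * σw n i * (σw n j * σw n i * ρw n j)⁻¹} ∪
  {r | ∃ i j : Fin (n-1), (j:ℕ) = (i:ℕ)+1 ∧
      r = ρw n j * σw n i * σw n j * (σw n i * σw n j * ρw n i)⁻¹} ∪
  {r | ∃ i j : Fin (n-1), (i = j ∨ (i:ℕ)+1 < (j:ℕ) ∨ (j:ℕ)+1 < (i:ℕ)) ∧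
      r = σw n i * ρw n j * (σw n i)⁻¹ * (ρw n j)⁻¹}

/-- The singular braid group `SG_n`, given by the Baez–Birman presentation. -/
abbrev SG (n : ℕ) := PresentedGroup (sgRels n)

/-- The generator `σ_{i+1}` of `SG_n` (0-indexed `i`). -/
def σ (n : ℕ) (i : Fin (n-1)) : SG n := PresentedGroup.of (Sum.inl i)

/-- The generator `ρ_{i+1}` of `SG_n` (0-indexed `i`). -/
def ρ (n : ℕ) (i : Fin (n-1)) : SG n := PresentedGroup.of (Sum.inr i)

end SingBraid

namespace SingBraid

variable {n : ℕ}

lemma mk_rel {r : FreeGroup (Fin (n-1) ⊕ Fin (n-1))} (h : r ∈ sgRels n) :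
    PresentedGroup.mk (sgRels n) r = 1 :=
  (QuotientGroup.eq_one_iff r).mpr (Subgroup.subset_normalClosure h)

lemma mk_σw (i : Fin (n-1)) : PresentedGroup.mk (sgRels n) (σw n i) = σ n i := rfl
lemma mk_ρw (i : Fin (n-1)) : PresentedGroup.mk (sgRels n) (ρw n i) = ρ n i := rfl

lemma σσ_comm {i j : Fin (n-1)} (h : (i:ℕ)+1 < (j:ℕ) ∨ (j:ℕ)+1 < (i:ℕ)) :
    Commute (σ n i) (σ n j) := by
  have h1 := mk_rel (n := n) (r := σw n i * σw n j * (σw n i)⁻¹ * (σw n j)⁻¹)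
    (Or.inl (Or.inl (Or.inl (Or.inl (Or.inl ⟨i, j, h, rfl⟩)))))
  simp only [map_mul, map_inv, mk_σw, mk_ρw] at h1
  exact commutatorElement_eq_one_iff_commute.mp h1

lemma ρρ_comm {i j : Fin (n-1)} (h : (i:ℕ)+1 < (j:ℕ) ∨ (j:ℕ)+1 < (i:ℕ)) :
    Commute (ρ n i) (ρ n j) := by
  have h1 := mk_rel (n := n) (r := ρw n i * ρw n j * (ρw n i)⁻¹ * (ρw n j)⁻¹)
    (Or.inl (Or.inl (Or.inl (Or.inr ⟨i, j, h, rfl⟩))))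
  simp only [map_mul, map_inv, mk_σw, mk_ρw] at h1
  exact commutatorElement_eq_one_iff_commute.mp h1

lemma σρ_comm {i j : Fin (n-1)} (h : i = j ∨ (i:ℕ)+1 < (j:ℕ) ∨ (j:ℕ)+1 < (i:ℕ)) :
    Commute (σ n i) (ρ n j) := by
  have h1 := mk_rel (n := n) (r := σw n i * ρw n j * (σw n i)⁻¹ * (ρw n j)⁻¹)
    (Or.inr ⟨i, j, h, rfl⟩)
  simp only [map_mul, map_inv, mk_σw, mk_ρw] at h1
  exact commutatorElement_eq_one_iff_commute.mp h1

lemma braid_rel {i j : Fin (n-1)} (h : (j:ℕ) = (i:ℕ)+1) :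
    σ n i * σ n j * σ n i = σ n j * σ n i * σ n j := by
  have h1 := mk_rel (n := n) (r := σw n i * σw n j * σw n i * (σw n j * σw n i * σw n j)⁻¹)
    (Or.inl (Or.inl (Or.inl (Or.inl (Or.inr ⟨i, j, h, rfl⟩)))))
  simp only [map_mul, map_inv, mk_σw, mk_ρw] at h1
  -- h1 : σ i * σ j * σ i * (σ j * σ i * σ j)⁻¹ = 1
  rwa [mul_inv_eq_one] at h1

lemma mixed_rel {i j : Fin (n-1)} (h : (j:ℕ) = (i:ℕ)+1) :
    ρ n i * σ n j * σ n i = σ n j * σ n i * ρ n j := by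
  have h1 := mk_rel (n := n) (r := ρw n i * σw n j * σw n i * (σw n j * σw n i * ρw n j)⁻¹)
    (Or.inl (Or.inl (Or.inr ⟨i, j, h, rfl⟩)))
  simp only [map_mul, map_inv, mk_σw, mk_ρw] at h1
  rwa [mul_inv_eq_one] at h1


/-- exponent-sum homomorphism to `ℤ × ℤ`. -/
def phi (n : ℕ) : SG n →* Multiplicative (ℤ × ℤ) :=
  PresentedGroup.toGroup (f := Sum.elim (fun _ => Multiplicative.ofAdd ((1:ℤ),(0:ℤ)))
      (fun _ => Multiplicative.ofAdd ((0:ℤ),(1:ℤ)))) (by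
    rintro r (((((⟨i,j,-,rfl⟩|⟨i,j,-,rfl⟩)|⟨i,j,-,rfl⟩)|⟨i,j,-,rfl⟩)|⟨i,j,-,rfl⟩)|⟨i,j,-,rfl⟩) <;>
      simp only [σw, ρw, map_mul, map_inv, FreeGroup.lift_apply_of, Sum.elim_inl, Sum.elim_inr] <;>
      decide)

lemma phi_σ (i : Fin (n-1)) : phi n (σ n i) = Multiplicative.ofAdd ((1:ℤ),(0:ℤ)) :=
  PresentedGroup.toGroup.of _

lemma phi_ρ (i : Fin (n-1)) : phi n (ρ n i) = Multiplicative.ofAdd ((0:ℤ),(1:ℤ)) :=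
  PresentedGroup.toGroup.of _


section Ab
open Abelianization

lemma ab_σ_succ {i j : Fin (n-1)} (h : (j:ℕ) = (i:ℕ)+1) :
    Abelianization.of (σ n j) = Abelianization.of (σ n i) := by
  have e := congrArg Abelianization.of (braid_rel h)
  simp only [map_mul] at e
  set x := Abelianization.of (σ n i)
  set y := Abelianization.of (σ n j)
  have e' : x * y * x = x * y * y := e.trans (by rw [mul_comm y x])
  exact (mul_left_cancel e').symm

lemma ab_ρ_succ {i j : Fin (n-1)} (h : (j:ℕ) = (i:ℕ)+1) :
    Abelianization.of (ρ n j) = Abelianization.of (ρ n i) := by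
  have e := congrArg Abelianization.of (mixed_rel h)
  simp only [map_mul] at e
  set u := Abelianization.of (ρ n i)
  set v := Abelianization.of (ρ n j)
  set x := Abelianization.of (σ n i)
  set y := Abelianization.of (σ n j)
  have e' : u * (y * x) = v * (y * x) := by
    rw [← mul_assoc, e, mul_comm]
  exact (mul_right_cancel e').symm

lemma ab_σ_zero (h0 : 0 < n-1) :
    ∀ (k : ℕ) (hk : k < n-1),
      Abelianization.of (σ n ⟨k, hk⟩) = Abelianization.of (σ n ⟨0, h0⟩) := by
  intro k
  induction k with
  | zero => intro hk; rfl
  | succ k ih =>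
    intro hk
    rw [ab_σ_succ (i := ⟨k, Nat.lt_of_succ_lt hk⟩) (j := ⟨k+1, hk⟩) rfl]
    exact ih _

lemma ab_ρ_zero (h0 : 0 < n-1) :
    ∀ (k : ℕ) (hk : k < n-1),
      Abelianization.of (ρ n ⟨k, hk⟩) = Abelianization.of (ρ n ⟨0, h0⟩) := by
  intro k
  induction k with
  | zero => intro hk; rfl
  | succ k ih =>
    intro hk
    rw [ab_ρ_succ (i := ⟨k, Nat.lt_of_succ_lt hk⟩) (j := ⟨k+1, hk⟩) rfl]
    exact ih _

lemma ker_phi_le_commutator (h0 : 0 < n-1) :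
    (phi n).ker ≤ commutator (SG n) := by
  set s := Abelianization.of (σ n ⟨0, h0⟩) with hs
  set r := Abelianization.of (ρ n ⟨0, h0⟩) with hr
  -- every g satisfies: of g = s ^ (φ g).1 * r ^ (φ g).2
  have key : ∀ g : SG n,
      Abelianization.of g
        = s ^ (Multiplicative.toAdd (phi n g)).1 * r ^ (Multiplicative.toAdd (phi n g)).2 := by
    intro g
    let H : Subgroup (SG n) :=
      { carrier := {g | Abelianization.of g
          = s ^ (Multiplicative.toAdd (phi n g)).1 * r ^ (Multiplicative.toAdd (phi n g)).2}
        one_mem' := by simp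
        mul_mem' := by
          rintro a b (ha : _ = _) (hb : _ = _)
          show Abelianization.of (a*b) = _
          rw [map_mul, ha, hb, map_mul]
          rw [toAdd_mul, Prod.fst_add, Prod.snd_add, zpow_add, zpow_add]
          exact mul_mul_mul_comm _ _ _ _
        inv_mem' := by
          rintro a (ha : _ = _)
          show Abelianization.of a⁻¹ = _
          rw [map_inv, ha, map_inv, toAdd_inv, Prod.fst_neg, Prod.snd_neg,
            zpow_neg, zpow_neg, mul_inv_rev, mul_comm] }
    refine PresentedGroup.generated_by _ H ?_ g
    rintro (i | i)
    · show Abelianization.of (σ n i)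
          = s ^ (Multiplicative.toAdd (phi n (σ n i))).1
            * r ^ (Multiplicative.toAdd (phi n (σ n i))).2
      rw [phi_σ]
      simp only [toAdd_ofAdd, zpow_one, zpow_zero, mul_one]
      obtain ⟨k, hk⟩ := i
      exact ab_σ_zero h0 k hk
    · show Abelianization.of (ρ n i)
          = s ^ (Multiplicative.toAdd (phi n (ρ n i))).1
            * r ^ (Multiplicative.toAdd (phi n (ρ n i))).2
      rw [phi_ρ]
      simp only [toAdd_ofAdd, zpow_zero, zpow_one, one_mul]
      obtain ⟨k, hk⟩ := i
      exact ab_ρ_zero h0 k hk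
  intro g hg
  have h1 : phi n g = 1 := hg
  have h2 : Abelianization.of g = 1 := by
    rw [key g, h1]; simp
  exact (QuotientGroup.eq_one_iff g).mp h2

end Ab

section Conj

variable {G : Type*} [Group G]

/-- conjugation trick: if `c` commutes with `g` then conjugation by `x` agrees with
conjugation by `x * c⁻¹`. -/
lemma conj_mem_of_commute (K : Subgroup G) {x c g : G} (hcg : Commute c g)
    (hxc : x * c⁻¹ ∈ K) (hg : g ∈ K) : x * g * x⁻¹ ∈ K := by
  have h3 : (x*c⁻¹) * g * (x*c⁻¹)⁻¹ = x*g*x⁻¹ := by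
    rw [mul_inv_rev, inv_inv]
    have e1 : x*c⁻¹*g = x*g*c⁻¹ := by
      rw [mul_assoc, hcg.inv_left.eq, ← mul_assoc]
    rw [← mul_assoc, e1, mul_assoc (x*g)]
    group
  rw [← h3]
  exact mul_mem (mul_mem hxc hg) (inv_mem hxc)

lemma conj_mem_of_commute' (K : Subgroup G) {x c g : G} (hcg : Commute c g)
    (hxc : Commute x c) (hm : x * c⁻¹ ∈ K) (hg : g ∈ K) :
    x * g * x⁻¹ ∈ K ∧ x⁻¹ * g * x ∈ K := by
  refine ⟨conj_mem_of_commute K hcg hm hg, ?_⟩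
  have h4 : x⁻¹ * g * x = x⁻¹ * g * (x⁻¹)⁻¹ := by rw [inv_inv]
  rw [h4]
  refine conj_mem_of_commute K hcg.inv_left ?_ hg
  have h5 : x⁻¹ * (c⁻¹)⁻¹ = (x * c⁻¹)⁻¹ := by
    rw [inv_inv, mul_inv_rev, inv_inv, hxc.inv_left.eq]
  rw [h5]
  exact inv_mem hm

lemma conj_closure_mem (x : G) (T : Set G)
    (h : ∀ t ∈ T, x * t * x⁻¹ ∈ Subgroup.closure T) :
    ∀ g ∈ Subgroup.closure T, x * g * x⁻¹ ∈ Subgroup.closure T := by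
  intro g hg
  have hmap : Subgroup.map (MulAut.conj x).toMonoidHom (Subgroup.closure T)
      ≤ Subgroup.closure T := by
    rw [MonoidHom.map_closure, Subgroup.closure_le]
    rintro _ ⟨t, ht, rfl⟩
    simpa using h t ht
  have : x * g * x⁻¹ = (MulAut.conj x).toMonoidHom g := by simp [mul_assoc]
  rw [this]
  exact hmap ⟨g, hg, rfl⟩

lemma conj_zpow_mem (x : G) (T : Set G)
    (h1 : ∀ t ∈ T, x * t * x⁻¹ ∈ Subgroup.closure T)
    (h2 : ∀ t ∈ T, x⁻¹ * t * x ∈ Subgroup.closure T) (k : ℤ) :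
    ∀ g ∈ Subgroup.closure T, x ^ k * g * (x ^ k)⁻¹ ∈ Subgroup.closure T := by
  have H1 := conj_closure_mem x T h1
  have H2 : ∀ g ∈ Subgroup.closure T, x⁻¹ * g * (x⁻¹)⁻¹ ∈ Subgroup.closure T := by
    have := conj_closure_mem x⁻¹ T (by intro t ht; rw [inv_inv]; exact h2 t ht)
    exact this
  induction k using Int.induction_on with
  | zero => intro g hg; simpa using hg
  | succ k ih =>
    intro g hg
    have e : x ^ ((k:ℤ)+1) * g * (x ^ ((k:ℤ)+1))⁻¹
        = x * (x ^ (k:ℤ) * g * (x ^ (k:ℤ))⁻¹) * x⁻¹ := by group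
    rw [e]
    exact H1 _ (ih g hg)
  | pred k ih =>
    intro g hg
    have e : x ^ (-(k:ℤ)-1) * g * (x ^ (-(k:ℤ)-1))⁻¹
        = x⁻¹ * (x ^ (-(k:ℤ)) * g * (x ^ (-(k:ℤ)))⁻¹) * (x⁻¹)⁻¹ := by group
    rw [e]
    exact H2 _ (ih g hg)

end Conj

lemma conj_gen {G : Type*} [Group G] (T : Set G) {x c u d : G}
    (hcu : Commute c u) (hcd : Commute c d) (hxc : Commute x c)
    (hm : x * c⁻¹ ∈ Subgroup.closure T) (hud : u * d⁻¹ ∈ Subgroup.closure T) :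
    x * (u * d⁻¹) * x⁻¹ ∈ Subgroup.closure T ∧ x⁻¹ * (u * d⁻¹) * x ∈ Subgroup.closure T := by
  have h := conj_mem_of_commute' (Subgroup.closure T) (hcu.mul_right hcd.inv_right) hxc hm hud
  exact h


end SingBraid

open SingBraid in
/-- For every integer `n ≥ 5`, the commutator subgroup of the singular braid group `SG_n`
is finitely generated as a subgroup of `SG_n`. -/
theorem sg_commutator_fg (n : ℕ) (hn : 5 ≤ n) : (commutator (SG n)).FG := by
  have h0 : 0 < n-1 := by omega
  have h1 : 1 < n-1 := by omega
  have h3 : 3 < n-1 := by omega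
  set i0 : Fin (n-1) := ⟨0, h0⟩ with hi0
  set i1 : Fin (n-1) := ⟨1, h1⟩ with hi1
  set i3 : Fin (n-1) := ⟨3, h3⟩ with hi3
  set a : SG n := σ n i0 with ha
  set rr : SG n := ρ n i0 with hrr
  set T : Set (SG n) :=
    (Set.range fun i => σ n i * a⁻¹) ∪ (Set.range fun i => ρ n i * rr⁻¹) with hT
  set K : Subgroup (SG n) := Subgroup.closure T with hK
  -- basic memberships
  have hpK : ∀ i : Fin (n-1), σ n i * a⁻¹ ∈ K :=
    fun i => Subgroup.subset_closure (Set.mem_union_left _ ⟨i, rfl⟩)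
  have htK : ∀ i : Fin (n-1), ρ n i * rr⁻¹ ∈ K :=
    fun i => Subgroup.subset_closure (Set.mem_union_right _ ⟨i, rfl⟩)
  -- fixed commuting facts
  have hσ0σ3 : Commute a (σ n i3) := σσ_comm (Or.inl (show (0:ℕ)+1 < 3 by norm_num))
  have hσ3σ1 : Commute (σ n i3) (σ n i1) := σσ_comm (Or.inr (show (1:ℕ)+1 < 3 by norm_num))
  have hσ3ρ1 : Commute (σ n i3) (ρ n i1) :=
    σρ_comm (Or.inr (Or.inr (show (1:ℕ)+1 < 3 by norm_num)))
  have hσ3ρ0 : Commute (σ n i3) rr :=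
    σρ_comm (Or.inr (Or.inr (show (0:ℕ)+1 < 3 by norm_num)))
  have hρ3σ1 : Commute (ρ n i3) (σ n i1) :=
    (σρ_comm (i := i1) (j := i3) (Or.inr (Or.inl (show (1:ℕ)+1 < 3 by norm_num)))).symm
  have hρ3σ0 : Commute (ρ n i3) a :=
    (σρ_comm (i := i0) (j := i3) (Or.inr (Or.inl (show (0:ℕ)+1 < 3 by norm_num)))).symm
  have hρ0ρ3 : Commute rr (ρ n i3) := ρρ_comm (Or.inl (show (0:ℕ)+1 < 3 by norm_num))
  have hρ3ρ1 : Commute (ρ n i3) (ρ n i1) :=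
    (ρρ_comm (i := i1) (j := i3) (Or.inl (show (1:ℕ)+1 < 3 by norm_num))).symm
  have hσ0ρ0 : Commute a rr := σρ_comm (Or.inl rfl)
  -- generic commutations for indices ≠ 1
  have hcomm_a_σ : ∀ i : Fin (n-1), (i:ℕ) ≠ 1 → Commute a (σ n i) := by
    intro i hi
    rcases eq_or_ne (i:ℕ) 0 with h | h
    · have : i = i0 := Fin.ext h
      rw [this]
    · exact σσ_comm (Or.inl (show (0:ℕ)+1 < (i:ℕ) by omega))
  have hcomm_a_ρ : ∀ i : Fin (n-1), (i:ℕ) ≠ 1 → Commute a (ρ n i) := by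
    intro i hi
    rcases eq_or_ne (i:ℕ) 0 with h | h
    · exact σρ_comm (Or.inl (Fin.ext h).symm)
    · exact σρ_comm (Or.inr (Or.inl (show (0:ℕ)+1 < (i:ℕ) by omega)))
  have hcomm_r_σ : ∀ i : Fin (n-1), (i:ℕ) ≠ 1 → Commute rr (σ n i) := by
    intro i hi
    rcases eq_or_ne (i:ℕ) 0 with h | h
    · exact (σρ_comm (i := i) (j := i0) (Or.inl (Fin.ext h))).symm
    · exact (σρ_comm (i := i) (j := i0) (Or.inr (Or.inr (show (0:ℕ)+1 < (i:ℕ) by omega)))).symm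
  have hcomm_r_ρ : ∀ i : Fin (n-1), (i:ℕ) ≠ 1 → Commute rr (ρ n i) := by
    intro i hi
    rcases eq_or_ne (i:ℕ) 0 with h | h
    · have : i = i0 := Fin.ext h
      rw [this]
    · exact ρρ_comm (Or.inl (show (0:ℕ)+1 < (i:ℕ) by omega))
  -- membership of the two special "swap" elements
  have m1 : a * (σ n i3)⁻¹ ∈ K := by
    have e : a * (σ n i3)⁻¹ = (σ n i3 * a⁻¹)⁻¹ := by rw [mul_inv_rev, inv_inv]
    rw [e]; exact inv_mem (hpK i3)
  have m2 : rr * (ρ n i3)⁻¹ ∈ K := by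
    have e : rr * (ρ n i3)⁻¹ = (ρ n i3 * rr⁻¹)⁻¹ := by rw [mul_inv_rev, inv_inv]
    rw [e]; exact inv_mem (htK i3)
  have mtriv : ∀ x : SG n, x * x⁻¹ ∈ K := by
    intro x; rw [mul_inv_cancel]; exact one_mem K
  -- conjugation of generators of K by a and rr
  have keyA : ∀ t ∈ T, a * t * a⁻¹ ∈ K ∧ a⁻¹ * t * a ∈ K := by
    intro t ht
    rcases ht with ⟨i, rfl⟩ | ⟨i, rfl⟩
    · by_cases hi : (i:ℕ) = 1
      · have : i = i1 := Fin.ext hi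
        subst this
        exact conj_gen T hσ3σ1 hσ0σ3.symm hσ0σ3 m1 (hpK i1)
      · exact conj_gen T (hcomm_a_σ i hi) (Commute.refl a) (Commute.refl a)
          (mtriv a) (hpK i)
    · by_cases hi : (i:ℕ) = 1
      · have : i = i1 := Fin.ext hi
        subst this
        exact conj_gen T hσ3ρ1 hσ3ρ0 hσ0σ3 m1 (htK i1)
      · exact conj_gen T (hcomm_a_ρ i hi) hσ0ρ0 (Commute.refl a) (mtriv a) (htK i)
  have keyR : ∀ t ∈ T, rr * t * rr⁻¹ ∈ K ∧ rr⁻¹ * t * rr ∈ K := by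
    intro t ht
    rcases ht with ⟨i, rfl⟩ | ⟨i, rfl⟩
    · by_cases hi : (i:ℕ) = 1
      · have : i = i1 := Fin.ext hi
        subst this
        exact conj_gen T hρ3σ1 hρ3σ0 hρ0ρ3 m2 (hpK i1)
      · exact conj_gen T (hcomm_r_σ i hi) hσ0ρ0.symm (Commute.refl rr) (mtriv rr) (hpK i)
    · by_cases hi : (i:ℕ) = 1
      · have : i = i1 := Fin.ext hi
        subst this
        exact conj_gen T hρ3ρ1 hρ0ρ3.symm hρ0ρ3 m2 (htK i1)
      · exact conj_gen T (hcomm_r_ρ i hi) (Commute.refl rr) (Commute.refl rr)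
          (mtriv rr) (htK i)
  -- conjugation by arbitrary powers
  have zA : ∀ (p : ℤ), ∀ g ∈ K, a ^ p * g * (a ^ p)⁻¹ ∈ K :=
    fun p => conj_zpow_mem a T (fun t ht => (keyA t ht).1)
      (fun t ht => (keyA t ht).2) p
  have zR : ∀ (q : ℤ), ∀ g ∈ K, rr ^ q * g * (rr ^ q)⁻¹ ∈ K :=
    fun q => conj_zpow_mem rr T (fun t ht => (keyR t ht).1)
      (fun t ht => (keyR t ht).2) q
  have conj_ar : ∀ (p q : ℤ), ∀ g ∈ K, (a^p * rr^q) * g * (a^p * rr^q)⁻¹ ∈ K := by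
    intro p q g hg
    have e : (a^p * rr^q) * g * (a^p * rr^q)⁻¹ = a^p * (rr^q * g * (rr^q)⁻¹) * (a^p)⁻¹ := by
      group
    rw [e]; exact zA p _ (zR q g hg)
  have conj_ar' : ∀ (p q : ℤ), ∀ g ∈ K, (a^p * rr^q)⁻¹ * g * (a^p * rr^q) ∈ K := by
    intro p q g hg
    have e : (a^p * rr^q)⁻¹ * g * (a^p * rr^q)
        = rr^(-q) * (a^(-p) * g * (a^(-p))⁻¹) * (rr^(-q))⁻¹ := by group
    rw [e]; exact zR (-q) _ (zA (-p) g hg)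
  -- the subgroup K·⟨a,rr⟩
  set Sset : Subgroup (SG n) :=
    { carrier := {g | ∃ k ∈ K, ∃ p q : ℤ, g = k * a^p * rr^q}
      one_mem' := ⟨1, one_mem K, 0, 0, by simp⟩
      mul_mem' := by
        rintro g g' ⟨k, hk, p, q, rfl⟩ ⟨k', hk', p', q', rfl⟩
        refine ⟨k * ((a^p * rr^q) * k' * (a^p * rr^q)⁻¹),
          mul_mem hk (conj_ar p q k' hk'), p + p', q + q', ?_⟩
        have hcomm : (rr^q)⁻¹ * a^p' * rr^q = a^p' := by
          have h := (hσ0ρ0.zpow_zpow p' q).symm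
          rw [h.inv_left.eq]
          group
        have e : k * ((a^p * rr^q) * k' * (a^p * rr^q)⁻¹) * a^(p+p') * rr^(q+q')
            = k * a^p * rr^q * k' * ((rr^q)⁻¹ * a^p' * rr^q) * rr^q' := by group
        rw [e, hcomm]
        group
      inv_mem' := by
        rintro g ⟨k, hk, p, q, rfl⟩
        refine ⟨(a^p * rr^q)⁻¹ * k⁻¹ * (a^p * rr^q),
          conj_ar' p q k⁻¹ (inv_mem hk), -p, -q, ?_⟩
        have hcomm2 : rr^q * a^(-p) * (rr^q)⁻¹ = a^(-p) := by
          rw [← (hσ0ρ0.zpow_zpow (-p) q).eq]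
          group
        have e2 : ((a^p * rr^q)⁻¹ * k⁻¹ * (a^p * rr^q)) * a^(-p) * rr^(-q)
            = (a^p * rr^q)⁻¹ * k⁻¹ * (a^p * (rr^q * a^(-p) * (rr^q)⁻¹)) := by group
        rw [e2, hcomm2]
        group } with hSset
  have htop : ∀ g : SG n, ∃ k ∈ K, ∃ p q : ℤ, g = k * a^p * rr^q := by
    intro g
    refine PresentedGroup.generated_by _ Sset ?_ g
    rintro (i | i)
    · exact ⟨σ n i * a⁻¹, hpK i, 1, 0, by
        show σ n i = σ n i * a⁻¹ * a^(1:ℤ) * rr^(0:ℤ); group⟩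
    · exact ⟨ρ n i * rr⁻¹, htK i, 0, 1, by
        show ρ n i = ρ n i * rr⁻¹ * a^(0:ℤ) * rr^(1:ℤ); group⟩
  -- K is inside the kernel of phi
  have hker : K ≤ (phi n).ker := by
    rw [hK, Subgroup.closure_le]
    rintro t (⟨i, rfl⟩ | ⟨i, rfl⟩)
    · show phi n (σ n i * a⁻¹) = 1
      rw [map_mul, map_inv, phi_σ, ha, phi_σ, mul_inv_cancel]
    · show phi n (ρ n i * rr⁻¹) = 1
      rw [map_mul, map_inv, phi_ρ, hrr, phi_ρ, mul_inv_cancel]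
  have hkerleK : (phi n).ker ≤ K := by
    intro g hg
    obtain ⟨k, hk, p, q, hgeq⟩ := htop g
    have hφg : phi n g = 1 := hg
    have hφk : phi n k = 1 := hker hk
    rw [hgeq, map_mul, map_mul, map_zpow, map_zpow, hφk, one_mul, ha, hrr, phi_σ, phi_ρ] at hφg
    have h4 := congrArg Multiplicative.toAdd hφg
    simp only [toAdd_mul, toAdd_zpow, toAdd_ofAdd, toAdd_one, Prod.smul_mk, smul_eq_mul,
      mul_one, mul_zero, Prod.mk_add_mk, add_zero, zero_add, Prod.mk_eq_zero] at h4
    rw [hgeq, h4.1, h4.2]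
    simpa using hk
  have hcomm_eq : commutator (SG n) = K :=
    le_antisymm ((Abelianization.commutator_subset_ker (phi n)).trans hkerleK)
      (hker.trans (ker_phi_le_commutator h0))
  rw [hcomm_eq, hK]
  exact (Subgroup.fg_iff _).mpr ⟨T, rfl, (Set.finite_range _).union (Set.finite_range _)⟩
end

section
/- The commutator subgroup SG_3' = [SG_3, SG_3] of the singular braid group SG_3 is not finitely generated as a subgroup of SG_3. -/
noncomputable section
open LaurentPolynomial

namespace SG3Aux

abbrev R := LaurentPolynomial (ZMod 3)

lemma h3 : (3 : R) = 0 := by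
  have h : ((3:ℕ) : R) = C ((3:ℕ) : ZMod 3) := (map_natCast (C : ZMod 3 →+* R) 3).symm
  have h2 : ((3:ℕ) : ZMod 3) = 0 := by decide
  rw [h2, map_zero] at h
  exact_mod_cast h

/-- The action of units of `R` on `Multiplicative R` by multiplication. -/
def actE (r : Rˣ) : Multiplicative R ≃* Multiplicative R where
  toFun x := .ofAdd ((r : R) * x.toAdd)
  invFun x := .ofAdd (((r⁻¹ : Rˣ) : R) * x.toAdd)
  left_inv x := by simp [← mul_assoc]
  right_inv x := by simp [← mul_assoc]
  map_mul' x y := by simp [mul_add, ofAdd_add]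

def act : Rˣ →* MulAut (Multiplicative R) where
  toFun := actE
  map_one' := by ext x; simp [actE]
  map_mul' r s := by ext x; simp [actE, mul_assoc]

abbrev G' := SemidirectProduct (Multiplicative R) Rˣ act

/-- The affine element `x ↦ r x + a`. -/
def el (a : R) (r : Rˣ) : G' := ⟨.ofAdd a, r⟩

lemma act_apply (r : Rˣ) (a : R) : act r (.ofAdd a) = .ofAdd ((r : R) * a) := rfl

lemma el_mul (a b : R) (r s : Rˣ) : el a r * el b s = el (a + r * b) (r * s) := by
  apply SemidirectProduct.ext
  · show Multiplicative.ofAdd a * act r (Multiplicative.ofAdd b) = _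
    rw [act_apply, ← ofAdd_add]; rfl
  · rfl

lemma el_one : el 0 1 = 1 := rfl

lemma el_inv (a : R) (r : Rˣ) : (el a r)⁻¹ = el (-((r⁻¹ : Rˣ) * a)) r⁻¹ := by
  apply inv_eq_of_mul_eq_one_right
  rw [el_mul, ← el_one]
  congr 1
  · have : (r : R) * ((r⁻¹ : Rˣ) * a) = a := by
      rw [← mul_assoc, ← Units.val_mul, mul_inv_cancel, Units.val_one, one_mul]
    rw [mul_neg, this, add_neg_cancel]
  · exact mul_inv_cancel r

lemma el_left (a : R) (r : Rˣ) : (el a r).left = .ofAdd a := rfl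
lemma el_right (a : R) (r : Rˣ) : (el a r).right = r := rfl

lemma el_inj {a b : R} {r s : Rˣ} (h : el a r = el b s) : a = b ∧ r = s := by
  constructor
  · have := congrArg SemidirectProduct.left h
    simpa [el_left] using this
  · exact congrArg SemidirectProduct.right h

/-- `u = 2` as a unit. -/
def U : Rˣ := ⟨2, 2, by linear_combination h3, by linear_combination h3⟩

/-- `v = T 1` as a unit. -/
def V : Rˣ := ⟨T 1, T (-1), by rw [← T_add]; norm_num [T_zero], by rw [← T_add]; norm_num [T_zero]⟩

def s1 : G' := el (-1) U
def s2 : G' := el 1 U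
def r1 : G' := el (1 - T 1) V
def r2 : G' := el (2 - 2 * T 1) V

lemma Uval : (U : R) = 2 := rfl
lemma Vval : (V : R) = T 1 := rfl

end SG3Aux
end

namespace SG3Aux
open SingBraid LaurentPolynomial

lemma braid : s1 * s2 * s1 = s2 * s1 * s2 := by
  simp only [s1, s2, el_mul]
  congr 1
  push_cast [Uval, Units.val_mul]
  linear_combination (-2 : R) * h3

lemma rel4 : r1 * s2 * s1 = s2 * s1 * r2 := by
  simp only [s1, s2, r1, r2, el_mul]
  congr 1
  · push_cast [Uval, Vval, Units.val_mul]
    linear_combination (-2 + 2 * T 1 : R) * h3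
  · rw [mul_assoc, mul_comm V]

lemma rel5 : r2 * s1 * s2 = s1 * s2 * r1 := by
  simp only [s1, s2, r1, r2, el_mul]
  congr 1
  · push_cast [Uval, Vval, Units.val_mul]
    linear_combination (-1 + T 1 : R) * h3
  · rw [mul_assoc, mul_comm V]

lemma rel6a : s1 * r1 = r1 * s1 := by
  simp only [s1, r1, el_mul]
  congr 1
  · push_cast [Uval, Vval, Units.val_mul]
    ring
  · exact mul_comm U V

lemma rel6b : s2 * r2 = r2 * s2 := by
  simp only [s2, r2, el_mul]
  congr 1
  · push_cast [Uval, Vval, Units.val_mul]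
    linear_combination (1 - T 1 : R) * h3
  · exact mul_comm U V

noncomputable def fgen : Fin (3-1) ⊕ Fin (3-1) → G'
  | .inl i => if (i : ℕ) = 0 then s1 else s2
  | .inr i => if (i : ℕ) = 0 then r1 else r2

lemma f_s1 (h : 0 < 3 - 1) : fgen (Sum.inl ⟨0, h⟩) = s1 := rfl
lemma f_s2 (h : 1 < 3 - 1) : fgen (Sum.inl ⟨1, h⟩) = s2 := rfl
lemma f_r1 (h : 0 < 3 - 1) : fgen (Sum.inr ⟨0, h⟩) = r1 := rfl
lemma f_r2 (h : 1 < 3 - 1) : fgen (Sum.inr ⟨1, h⟩) = r2 := rfl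

set_option maxHeartbeats 1000000 in
lemma relcheck : ∀ r ∈ sgRels 3, FreeGroup.lift fgen r = 1 := by
  intro r hr
  rcases hr with ((((hr | hr) | hr) | hr) | hr) | hr <;>
    obtain ⟨i, j, hij, rfl⟩ := hr <;>
    fin_cases i <;> fin_cases j <;> simp only [Fin.isValue, Fin.val_zero, Fin.val_one] at hij <;>
    first
      | omega
      | (rcases hij with h | h <;> omega)
      | (rcases hij with h | h | h
         · exact absurd h (by decide)
         · omega
         · omega)
      | (simp only [σw, ρw, map_mul, map_inv, FreeGroup.lift_apply_of, f_s1, f_s2, f_r1, f_r2]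
         first
           | (rw [braid]; group)
           | (rw [rel4]; group)
           | (rw [rel5]; group)
           | (rw [rel6a]; group)
           | (rw [rel6b]; group))

noncomputable def φSG : SG 3 →* G' := PresentedGroup.toGroup relcheck

lemma φ_σ0 : φSG (σ 3 0) = s1 := PresentedGroup.toGroup.of relcheck
lemma φ_σ1 : φSG (σ 3 1) = s2 := PresentedGroup.toGroup.of relcheck
lemma φ_ρ0 : φSG (ρ 3 0) = r1 := PresentedGroup.toGroup.of relcheck

lemma conj_el (x : G') (c : R) :
    x * el c 1 * x⁻¹ = el ((x.right : R) * c) 1 := by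
  obtain ⟨m, r⟩ := x
  have hx : (⟨m, r⟩ : G') = el m.toAdd r := rfl
  rw [hx, el_mul, el_inv, el_mul]
  congr 1
  · have hrr : (↑r : R) * (↑r⁻¹ * m.toAdd) = m.toAdd := by
      rw [← mul_assoc, ← Units.val_mul, mul_inv_cancel, Units.val_one, one_mul]
    rw [mul_one, mul_neg, hrr, el_right]
    ring
  · rw [mul_one, mul_inv_cancel]

lemma Uinv : ((U⁻¹ : Rˣ) : R) = 2 := rfl

open scoped commutatorElement in
lemma key_eq : ⁅s1, s2⁆ = el 2 1 := by
  rw [commutatorElement_def]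
  simp only [s1, s2, el_inv, el_mul]
  congr 1
  · push_cast [Uval, Uinv, Units.val_mul]
    linear_combination (-3 : R) * h3
  · group

end SG3Aux

namespace SG3Aux
open SingBraid LaurentPolynomial

lemma mem_K (n : ℕ) :
    el (AddMonoidAlgebra.single (n : ℤ) (2 : ZMod 3)) 1 ∈ ⁅φSG.range, φSG.range⁆ := by
  set g := (φSG (ρ 3 0)) ^ n with hgdef
  have hg : g ∈ φSG.range := pow_mem (MonoidHom.mem_range.mpr ⟨ρ 3 0, rfl⟩) n
  have hs1 : s1 ∈ φSG.range := MonoidHom.mem_range.mpr ⟨σ 3 0, φ_σ0⟩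
  have hs2 : s2 ∈ φSG.range := MonoidHom.mem_range.mpr ⟨σ 3 1, φ_σ1⟩
  have h1 : g * s1 * g⁻¹ ∈ φSG.range := mul_mem (mul_mem hg hs1) (inv_mem hg)
  have h2 : g * s2 * g⁻¹ ∈ φSG.range := mul_mem (mul_mem hg hs2) (inv_mem hg)
  have hcomm := Subgroup.commutator_mem_commutator h1 h2
  rw [← conjugate_commutatorElement, key_eq, conj_el] at hcomm
  have hgright : ((g.right : Rˣ) : R) = T (n : ℤ) := by
    have h1 : g.right = V ^ n := by
      calc g.right = SemidirectProduct.rightHom g := rfl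
        _ = (SemidirectProduct.rightHom (φSG (ρ 3 0))) ^ n := by rw [hgdef, map_pow]
        _ = V ^ n := by rw [φ_ρ0]; rfl
    rw [h1, Units.val_pow_eq_pow_val, Vval, T_pow, mul_one]
  have harg : ((g.right : Rˣ) : R) * 2 = AddMonoidAlgebra.single (n : ℤ) (2 : ZMod 3) := by
    rw [hgright, single_eq_C_mul_T]
    rw [show (C (2 : ZMod 3) : R) = 2 from map_ofNat C 2]
    ring
  rwa [harg] at hcomm

lemma fg_map_aux {G H : Type*} [Group G] [Group H] {P : Subgroup G} (h : P.FG) (f : G →* H) :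
    (P.map f).FG := by
  classical
  obtain ⟨S, hS⟩ := h
  exact ⟨S.image f, by rw [Finset.coe_image, ← MonoidHom.map_closure, hS]⟩

noncomputable def coeffHom (n : ℤ) : Multiplicative R →* Multiplicative (ZMod 3) :=
  AddMonoidHom.toMultiplicative
    { toFun := fun p => p.coeff n, map_zero' := rfl, map_add' := fun p q => Finsupp.add_apply p.coeff q.coeff n }

end SG3Aux


open SG3Aux LaurentPolynomial

open SingBraid in
/-- The commutator subgroup of the singular braid group `SG_3` is not finitely generated. -/
theorem sg3_commutator_not_fg : ¬ (commutator (SG 3)).FG := by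
  classical
  intro hfg
  have hKfg : ((commutator (SG 3)).map φSG).FG := fg_map_aux hfg φSG
  have hKcomm : (commutator (SG 3)).map φSG = ⁅φSG.range, φSG.range⁆ := by
    rw [commutator_def, Subgroup.map_commutator, ← MonoidHom.range_eq_map]
  rw [hKcomm] at hKfg
  have hright : ∀ x ∈ ⁅φSG.range, φSG.range⁆, SemidirectProduct.rightHom x = 1 := by
    have hle : ⁅φSG.range, φSG.range⁆ ≤ MonoidHom.ker SemidirectProduct.rightHom :=
      Subgroup.commutator_le.mpr fun g1 _ g2 _ => by
        rw [MonoidHom.mem_ker, map_commutatorElement]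
        exact commutatorElement_eq_one_iff_mul_comm.mpr (mul_comm _ _)
    exact fun x hx => MonoidHom.mem_ker.mp (hle hx)
  obtain ⟨S, hS⟩ := hKfg
  set S' : Finset (Multiplicative R) := S.image SemidirectProduct.left with hS'def
  have hmap : (Subgroup.closure (↑S' : Set (Multiplicative R))).map SemidirectProduct.inl
      = ⁅φSG.range, φSG.range⁆ := by
    rw [MonoidHom.map_closure, ← hS]
    congr 1
    rw [hS'def, Finset.coe_image, ← Set.image_comp]
    have hfix : ∀ x ∈ (S : Set G'), (SemidirectProduct.inl ∘ SemidirectProduct.left) x = x := by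
      intro x hx
      have h1 : x.right = 1 := hright x (hS ▸ Subgroup.subset_closure hx)
      calc (SemidirectProduct.inl ∘ SemidirectProduct.left) x
          = SemidirectProduct.inl x.left * SemidirectProduct.inr x.right := by
            rw [h1, map_one, mul_one]; rfl
        _ = x := SemidirectProduct.inl_left_mul_inr_right x
    rw [Set.image_congr hfix, Set.image_id']
  set N : ℕ := (S'.sup fun x => ((Multiplicative.toAdd x).coeff.support.sup fun k => k.toNat)) + 1
    with hNdef
  have hNS : ∀ x ∈ S', (Multiplicative.toAdd x).coeff ((N : ℕ) : ℤ) = 0 := by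
    intro x hx
    by_contra hne
    have hmem : ((N : ℕ) : ℤ) ∈ (Multiplicative.toAdd x).coeff.support := Finsupp.mem_support_iff.mpr hne
    have h1 : (((N : ℕ) : ℤ)).toNat ≤ (Multiplicative.toAdd x).coeff.support.sup (fun k => k.toNat) :=
      Finset.le_sup hmem
    have h2 : ((Multiplicative.toAdd x).coeff.support.sup fun k => k.toNat)
        ≤ S'.sup fun x => ((Multiplicative.toAdd x).coeff.support.sup fun k => k.toNat) :=
      Finset.le_sup (f := fun x => ((Multiplicative.toAdd x).coeff.support.sup fun k => k.toNat)) hx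
    rw [Int.toNat_natCast] at h1
    omega
  have hker : Subgroup.closure (↑S' : Set (Multiplicative R)) ≤ (coeffHom ((N : ℕ) : ℤ)).ker := by
    rw [Subgroup.closure_le]
    intro x hx
    rw [SetLike.mem_coe, MonoidHom.mem_ker]
    show Multiplicative.ofAdd ((Multiplicative.toAdd x).coeff ((N : ℕ) : ℤ)) = 1
    rw [hNS x hx]
    rfl
  have hmem := mem_K N
  rw [← hmap] at hmem
  obtain ⟨y, hy, hyeq⟩ := Subgroup.mem_map.mp hmem
  have hyval : y = Multiplicative.ofAdd (AddMonoidAlgebra.single ((N : ℕ) : ℤ) (2 : ZMod 3)) :=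
    congrArg SemidirectProduct.left hyeq
  have hky := hker hy
  rw [MonoidHom.mem_ker, hyval] at hky
  have hco : Multiplicative.ofAdd ((AddMonoidAlgebra.single ((N : ℕ) : ℤ) (2 : ZMod 3)).coeff ((N : ℕ) : ℤ))
      = (1 : Multiplicative (ZMod 3)) := hky
  rw [AddMonoidAlgebra.coeff_single, Finsupp.single_eq_same] at hco
  have h2 : (2 : ZMod 3) = 0 := by simpa using congrArg Multiplicative.toAdd hco
  exact absurd h2 (by decide)
end

section
/- The commutator subgroup SG_4' = [SG_4, SG_4] of the singular braid group SG_4 is not finitely generated as a subgroup of SG_4. -/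
namespace SG4Aux

open Finsupp Multiplicative SingBraid

abbrev M : Type := (ℤ × Fin 3) →₀ ℤ
abbrev Q : Type := Equiv.Perm (Fin 3) × Multiplicative ℤ

def domEquiv (q : Q) : (ℤ × Fin 3) ≃ (ℤ × Fin 3) :=
  (Equiv.addLeft (toAdd q.2)).prodCongr q.1

@[simp] lemma domEquiv_apply (q : Q) (p : ℤ × Fin 3) :
    domEquiv q p = (toAdd q.2 + p.1, q.1 p.2) := rfl

@[simp] lemma domEquiv_symm_apply (q : Q) (p : ℤ × Fin 3) :
    (domEquiv q).symm p = (-toAdd q.2 + p.1, q.1⁻¹ p.2) := rfl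

noncomputable def act : Q →* MulAut (Multiplicative M) where
  toFun q := AddEquiv.toMultiplicative (Finsupp.domCongr (M := ℤ) (domEquiv q))
  map_one' := by
    apply MulEquiv.ext; intro x
    show ofAdd (equivMapDomain _ (toAdd x)) = x
    apply congrArg ofAdd
    ext p
    simp only [equivMapDomain_apply, domEquiv_symm_apply, Prod.fst_one, Prod.snd_one,
      toAdd_one, neg_zero, zero_add, inv_one, Equiv.Perm.coe_one, id_eq]
    rfl
  map_mul' := by
    intro q q'
    apply MulEquiv.ext; intro x
    show ofAdd (equivMapDomain _ (toAdd x)) =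
      ofAdd (equivMapDomain _ (toAdd (ofAdd (equivMapDomain _ (toAdd x)))))
    apply congrArg ofAdd
    ext p
    simp [equivMapDomain_apply, add_assoc, mul_assoc]

@[simp] lemma act_apply (q : Q) (m : M) :
    act q (ofAdd m) = ofAdd (equivMapDomain (domEquiv q) m) := rfl

lemma domEquiv_inv (q : Q) : domEquiv q⁻¹ = (domEquiv q).symm := by
  apply Equiv.ext; intro p
  simp

@[simp] lemma act_inv_apply (q : Q) (m : M) :
    (act q)⁻¹ (ofAdd m) = ofAdd (equivMapDomain (domEquiv q).symm m) := by
  rw [← map_inv, act_apply, domEquiv_inv]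

lemma equivMapDomain_neg (e : (ℤ × Fin 3) ≃ (ℤ × Fin 3)) (f : M) :
    equivMapDomain e (-f) = - equivMapDomain e f := by
  simpa using map_neg (Finsupp.domCongr (M := ℤ) e) f

lemma equivMapDomain_add' (e : (ℤ × Fin 3) ≃ (ℤ × Fin 3)) (f g : M) :
    equivMapDomain e (f + g) = equivMapDomain e f + equivMapDomain e g := by
  simpa using map_add (Finsupp.domCongr (M := ℤ) e) f g

abbrev G : Type := SemidirectProduct (Multiplicative M) Q act

def aa : Fin 3 → Equiv.Perm (Fin 3) := ![Equiv.swap 0 1, Equiv.swap 1 2, Equiv.swap 0 1]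
def cc : Fin 3 → Fin 3 := ![2, 0, 2]

noncomputable def fσ (i : Fin 3) : G := ⟨1, (aa i, 1)⟩
noncomputable def fρ (i : Fin 3) : G := ⟨ofAdd (single ((0:ℤ), cc i) 1), (aa i, ofAdd 1)⟩

@[simp] lemma fσ_left (i : Fin 3) : (fσ i).left = 1 := rfl
@[simp] lemma fσ_right (i : Fin 3) : (fσ i).right = (aa i, 1) := rfl
@[simp] lemma fρ_left (i : Fin 3) : (fρ i).left = ofAdd (single ((0:ℤ), cc i) 1) := rfl
@[simp] lemma fρ_right (i : Fin 3) : (fρ i).right = (aa i, ofAdd 1) := rfl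

@[simp] lemma s01_0 : (Equiv.swap (0:Fin 3) 1) 0 = 1 := by decide
@[simp] lemma s01_1 : (Equiv.swap (0:Fin 3) 1) 1 = 0 := by decide
@[simp] lemma s01_2 : (Equiv.swap (0:Fin 3) 1) 2 = 2 := by decide
@[simp] lemma s12_0 : (Equiv.swap (1:Fin 3) 2) 0 = 0 := by decide
@[simp] lemma s12_1 : (Equiv.swap (1:Fin 3) 2) 1 = 2 := by decide
@[simp] lemma s12_2 : (Equiv.swap (1:Fin 3) 2) 2 = 1 := by decide

noncomputable def fgen : Fin 3 ⊕ Fin 3 → G := Sum.elim fσ fρ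

lemma hrels : ∀ r ∈ sgRels 4, FreeGroup.lift fgen r = 1 := by
  intro r hr
  simp only [sgRels, Set.mem_union, Set.mem_setOf_eq] at hr
  obtain ((((⟨i,j,hc,rfl⟩|⟨i,j,hc,rfl⟩)|⟨i,j,hc,rfl⟩)|⟨i,j,hc,rfl⟩)|⟨i,j,hc,rfl⟩)|⟨i,j,hc,rfl⟩ := hr <;>
  fin_cases i <;> fin_cases j <;>
  first
    | exact absurd hc (by decide)
    | (clear hc
       simp only [σw, ρw, map_mul, map_inv, FreeGroup.lift_apply_of, fgen, Sum.elim_inl, Sum.elim_inr,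
         mul_inv_eq_one, mul_inv_rev, inv_inv]
       refine SemidirectProduct.ext ?_ ?_
       · simp only [SemidirectProduct.mul_left, SemidirectProduct.inv_left,
           SemidirectProduct.mul_right, SemidirectProduct.inv_right,
           fσ_left, fρ_left, fσ_right, fρ_right, map_one, map_inv, mul_one, one_mul,
           act_apply, act_inv_apply, equivMapDomain_neg, equivMapDomain_add',
           equivMapDomain_single, domEquiv_apply,
           domEquiv_symm_apply, ← ofAdd_neg, ← ofAdd_add, toAdd_ofAdd,
           Equiv.swap_inv, Equiv.Perm.mul_apply, Prod.fst_mul, Prod.snd_mul,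
           Prod.fst_one, Prod.snd_one, Prod.inv_mk, Prod.fst_inv, Prod.snd_inv]
         norm_num [aa, cc, mul_inv_rev, s01_0, s01_1, s01_2, s12_0, s12_1, s12_2]
         try rfl
         try (congr 1)
         try abel
       · simp only [SemidirectProduct.mul_right, SemidirectProduct.inv_right,
           fσ_right, fρ_right]
         decide)

noncomputable def φh : SG 4 →* G := PresentedGroup.toGroup hrels

@[simp] lemma φh_σ (i : Fin 3) : φh (SingBraid.σ 4 i) = fσ i := PresentedGroup.toGroup.of hrels
@[simp] lemma φh_ρ (i : Fin 3) : φh (SingBraid.ρ 4 i) = fρ i := PresentedGroup.toGroup.of hrels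

@[simp] lemma toAdd_act (q : Q) (x : Multiplicative M) :
    toAdd (act q x) = equivMapDomain (domEquiv q) (toAdd x) := rfl

lemma mem_support_equivMapDomain {e : (ℤ × Fin 3) ≃ (ℤ × Fin 3)} {m : M} {p : ℤ × Fin 3} :
    p ∈ (equivMapDomain e m).support ↔ e.symm p ∈ m.support := by
  simp [Finsupp.mem_support_iff, equivMapDomain_apply]

/-- Shift homomorphism `G →* Multiplicative ℤ`. -/
noncomputable def shiftHom : G →* Multiplicative ℤ :=
  (MonoidHom.snd (Equiv.Perm (Fin 3)) (Multiplicative ℤ)).comp SemidirectProduct.rightHom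

@[simp] lemma shiftHom_apply (g : G) : shiftHom g = g.right.2 := rfl

/-- Elements with zero shift and lamp support (in the `ℤ` coordinate) inside `T`. -/
noncomputable def KT (T : Finset ℤ) : Subgroup G where
  carrier := {g | g.right.2 = 1 ∧ ∀ p ∈ (toAdd g.left).support, p.1 ∈ T}
  one_mem' := by
    refine ⟨rfl, ?_⟩
    intro p hp
    simp [SemidirectProduct.one_left] at hp
  mul_mem' := by
    rintro a b ⟨ha1, ha2⟩ ⟨hb1, hb2⟩
    refine ⟨?_, ?_⟩
    · show (a.right * b.right).2 = 1
      rw [Prod.snd_mul, ha1, hb1, mul_one]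
    · intro p hp
      rw [SemidirectProduct.mul_left, toAdd_mul] at hp
      rcases Finset.mem_union.mp (Finsupp.support_add hp) with h | h
      · exact ha2 p h
      · rw [toAdd_act, mem_support_equivMapDomain] at h
        have := hb2 _ h
        simpa [ha1] using this
  inv_mem' := by
    rintro a ⟨ha1, ha2⟩
    refine ⟨?_, ?_⟩
    · show (a.right⁻¹).2 = 1
      rw [Prod.snd_inv, ha1, inv_one]
    · intro p hp
      rw [SemidirectProduct.inv_left, toAdd_act, mem_support_equivMapDomain] at hp
      rw [toAdd_inv, Finsupp.support_neg] at hp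
      have := ha2 _ hp
      simpa [ha1] using this

lemma conj_left (g c : G) (hc : c.right = 1) :
    (g * c * g⁻¹).left = act g.right c.left := by
  simp only [SemidirectProduct.mul_left, SemidirectProduct.mul_right,
    SemidirectProduct.inv_left, SemidirectProduct.inv_right, hc, mul_one, map_inv,
    MulAut.apply_inv_self]
  exact mul_inv_cancel_comm _ _

end SG4Aux

open SingBraid SG4Aux Finsupp Multiplicative commutatorElement in
theorem sg4_commutator_not_fg_aux : ¬ (commutator (SG 4)).FG := by
  classical
  intro hFG
  obtain ⟨X, hX⟩ := hFG
  set T : Finset ℤ := X.biUnion (fun x => (toAdd (φh x).left).support.image Prod.fst) with hT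
  obtain ⟨k, hk⟩ := Infinite.exists_notMem_finset T
  have hmap : (commutator (SG 4)).map φh ≤ KT T := by
    rw [← hX, MonoidHom.map_closure]
    refine (Subgroup.closure_le _).mpr ?_
    rintro y ⟨x, hxX, rfl⟩
    have hx : x ∈ commutator (SG 4) := hX ▸ Subgroup.subset_closure hxX
    refine ⟨?_, ?_⟩
    · have := Abelianization.commutator_subset_ker (shiftHom.comp φh) hx
      simpa [MonoidHom.mem_ker] using this
    · intro p hp
      exact Finset.mem_biUnion.mpr ⟨x, hxX, Finset.mem_image.mpr ⟨p, hp, rfl⟩⟩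
  -- the witness element
  set i0 : Fin (4-1) := ⟨0, by norm_num⟩ with hi0
  set i1 : Fin (4-1) := ⟨1, by norm_num⟩ with hi1
  set w0 : SG 4 := (SingBraid.σ 4 i0)⁻¹ * SingBraid.ρ 4 i0 with hw0
  set w1 : SG 4 := (SingBraid.σ 4 i1)⁻¹ * SingBraid.ρ 4 i1 with hw1
  set ck : SG 4 := w0 ^ (k : ℤ) * ⁅w0, w1⁆ * (w0 ^ (k : ℤ))⁻¹ with hck
  have hckmem : ck ∈ commutator (SG 4) := by
    have h1 : ⁅w0, w1⁆ ∈ commutator (SG 4) := by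
      rw [commutator_def]
      exact Subgroup.commutator_mem_commutator (Subgroup.mem_top _) (Subgroup.mem_top _)
    exact (Subgroup.Normal.conj_mem inferInstance _ h1 _)
  have hin : φh ck ∈ KT T := hmap (Subgroup.mem_map_of_mem φh hckmem)
  -- computing the image
  have hU2 : φh w0 = ⟨ofAdd (single ((0:ℤ),(2:Fin 3)) 1), (1, ofAdd 1)⟩ := by
    rw [hw0, map_mul, map_inv, φh_σ, φh_ρ]
    refine SemidirectProduct.ext ?_ ?_
    · simp only [SemidirectProduct.mul_left, SemidirectProduct.inv_left, fσ_left, fσ_right,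
        fρ_left, fρ_right, inv_one, map_one, one_mul, SemidirectProduct.inv_right,
        act_apply, act_inv_apply, equivMapDomain_single, domEquiv_apply, domEquiv_symm_apply,
        Prod.inv_mk, Prod.fst_inv, Prod.snd_inv]
      have h2 : ((aa i0)⁻¹ (cc i0) : Fin 3) = 2 := by decide
      norm_num [h2]
    · show ((aa i0, 1)⁻¹ * (aa i0, ofAdd 1) : Q) = (1, ofAdd 1)
      have : aa i0 = Equiv.swap 0 1 := rfl
      rw [this]
      decide
  have hU0 : φh w1 = ⟨ofAdd (single ((0:ℤ),(0:Fin 3)) 1), (1, ofAdd 1)⟩ := by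
    rw [hw1, map_mul, map_inv, φh_σ, φh_ρ]
    refine SemidirectProduct.ext ?_ ?_
    · simp only [SemidirectProduct.mul_left, SemidirectProduct.inv_left, fσ_left, fσ_right,
        fρ_left, fρ_right, inv_one, map_one, one_mul, SemidirectProduct.inv_right,
        act_apply, act_inv_apply, equivMapDomain_single, domEquiv_apply, domEquiv_symm_apply,
        Prod.inv_mk, Prod.fst_inv, Prod.snd_inv]
      have h2 : ((aa i1)⁻¹ (cc i1) : Fin 3) = 0 := by decide
      norm_num [h2]
    · show ((aa i1, 1)⁻¹ * (aa i1, ofAdd 1) : Q) = (1, ofAdd 1)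
      have : aa i1 = Equiv.swap 1 2 := rfl
      rw [this]
      decide
  set m0 : M := single ((0:ℤ),(2:Fin 3)) 1 - single ((0:ℤ),(0:Fin 3)) 1
      - single ((1:ℤ),(2:Fin 3)) 1 + single ((1:ℤ),(0:Fin 3)) 1 with hm0
  have hcomm : ⁅φh w0, φh w1⁆ = ⟨ofAdd m0, 1⟩ := by
    rw [hU2, hU0]
    refine SemidirectProduct.ext ?_ ?_
    · show _ = ofAdd m0
      simp only [commutatorElement_def, SemidirectProduct.mul_left, SemidirectProduct.inv_left,
        SemidirectProduct.mul_right, SemidirectProduct.inv_right,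
        act_apply, act_inv_apply, equivMapDomain_neg, equivMapDomain_add',
        equivMapDomain_single, domEquiv_apply, domEquiv_symm_apply,
        ← ofAdd_neg, ← ofAdd_add, toAdd_ofAdd, Prod.inv_mk, Prod.fst_inv, Prod.snd_inv,
        Prod.fst_mul, Prod.snd_mul, Prod.fst_one, Prod.snd_one, inv_one,
        Equiv.Perm.coe_one, id_eq]
      rw [hm0]
      norm_num
      simp only [div_eq_mul_inv]
      simp [mul_comm, mul_left_comm, mul_assoc]
    · show (⁅((1 : Equiv.Perm (Fin 3)), ofAdd (1:ℤ)), (1, ofAdd (1:ℤ))⁆ : Q) = 1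
      decide
  have hgr : (φh (w0 ^ (k:ℤ))).right = ((1, ofAdd k) : Q) := by
    have h1 : (φh (w0 ^ (k:ℤ))).right = (φh w0).right ^ (k:ℤ) := by
      rw [map_zpow, ← SemidirectProduct.rightHom_eq_right]
      exact map_zpow SemidirectProduct.rightHom _ _
    rw [h1, hU2]
    refine Prod.ext ?_ ?_
    · show (((1, ofAdd 1) : Q) ^ (k:ℤ)).1 = 1
      simpa using map_zpow (MonoidHom.fst (Equiv.Perm (Fin 3)) (Multiplicative ℤ))
        ((1, ofAdd 1) : Q) k
    · show (((1, ofAdd 1) : Q) ^ (k:ℤ)).2 = ofAdd k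
      simpa [← ofAdd_zsmul] using map_zpow (MonoidHom.snd (Equiv.Perm (Fin 3)) (Multiplicative ℤ))
        ((1, ofAdd 1) : Q) k
  have hckleft : (φh ck).left = act ((1, ofAdd k) : Q) (ofAdd m0) := by
    rw [hck]
    rw [map_mul, map_mul, map_inv, map_commutatorElement]
    rw [conj_left _ _ (by rw [hcomm])]
    rw [hcomm, hgr]
  have hsup : ((k:ℤ), (0:Fin 3)) ∈ (toAdd (φh ck).left).support := by
    rw [hckleft]
    rw [toAdd_act, mem_support_equivMapDomain]
    rw [Finsupp.mem_support_iff]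
    simp only [domEquiv_symm_apply, Prod.fst, Prod.snd, inv_one, Equiv.Perm.coe_one, id_eq,
      toAdd_ofAdd]
    rw [hm0]
    norm_num [Finsupp.single_apply, Prod.mk.injEq]
    decide
  have := hin.2 _ hsup
  exact hk this


open SingBraid in
/-- The commutator subgroup of the singular braid group `SG_4` is not finitely generated. -/
theorem sg4_commutator_not_fg : ¬ (commutator (SG 4)).FG := by
  exact sg4_commutator_not_fg_aux
end

section
/- For every integer n ≥ 3, the commutator subgroup SG_n' = [SG_n, SG_n] of the singular braid group SG_n is a perfect group if and only if n ≥ 5; that is, [SG_n', SG_n'] = SG_n' holds exactly when n ≥ 5. -/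
open SingBraid
open scoped commutatorElement

namespace SGP
variable {n : ℕ}

lemma mk_rel_one {r : FreeGroup (Fin (n-1) ⊕ Fin (n-1))} (h : r ∈ sgRels n) :
    PresentedGroup.mk (sgRels n) r = 1 :=
  (QuotientGroup.eq_one_iff r).mpr (Subgroup.subset_normalClosure h)

lemma mk_eq {a b : FreeGroup (Fin (n-1) ⊕ Fin (n-1))} (h : a * b⁻¹ ∈ sgRels n) :
    PresentedGroup.mk (sgRels n) a = PresentedGroup.mk (sgRels n) b := by
  have h1 := mk_rel_one h
  rw [map_mul, map_inv, mul_inv_eq_one] at h1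
  exact h1

lemma mk_σw (i : Fin (n-1)) : PresentedGroup.mk (sgRels n) (σw n i) = σ n i := rfl
lemma mk_ρw (i : Fin (n-1)) : PresentedGroup.mk (sgRels n) (ρw n i) = ρ n i := rfl

lemma rel_ss {i j : Fin (n-1)} (h : (i:ℕ)+1 < (j:ℕ) ∨ (j:ℕ)+1 < (i:ℕ)) :
    σ n i * σ n j = σ n j * σ n i := by
  have h1 : (σw n i * σw n j) * (σw n j * σw n i)⁻¹ ∈ sgRels n := by
    refine Or.inl (Or.inl (Or.inl (Or.inl (Or.inl ⟨i, j, h, by group⟩))))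
  have := mk_eq h1
  simpa only [map_mul, mk_σw] using this

lemma rel_braid {i j : Fin (n-1)} (h : (j:ℕ) = (i:ℕ)+1) :
    σ n i * σ n j * σ n i = σ n j * σ n i * σ n j := by
  have h1 : (σw n i * σw n j * σw n i) * (σw n j * σw n i * σw n j)⁻¹ ∈ sgRels n := by
    exact Or.inl (Or.inl (Or.inl (Or.inl (Or.inr ⟨i, j, h, rfl⟩))))
  have := mk_eq h1
  simpa only [map_mul, mk_σw] using this

lemma rel_rr {i j : Fin (n-1)} (h : (i:ℕ)+1 < (j:ℕ) ∨ (j:ℕ)+1 < (i:ℕ)) :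
    ρ n i * ρ n j = ρ n j * ρ n i := by
  have h1 : (ρw n i * ρw n j) * (ρw n j * ρw n i)⁻¹ ∈ sgRels n := by
    refine Or.inl (Or.inl (Or.inl (Or.inr ⟨i, j, h, by group⟩)))
  have := mk_eq h1
  simpa only [map_mul, mk_ρw] using this

lemma rel_rss {i j : Fin (n-1)} (h : (j:ℕ) = (i:ℕ)+1) :
    ρ n i * σ n j * σ n i = σ n j * σ n i * ρ n j := by
  have h1 : (ρw n i * σw n j * σw n i) * (σw n j * σw n i * ρw n j)⁻¹ ∈ sgRels n := by
    exact Or.inl (Or.inl (Or.inr ⟨i, j, h, rfl⟩))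
  have := mk_eq h1
  simpa only [map_mul, mk_σw, mk_ρw] using this

lemma rel_sr {i j : Fin (n-1)} (h : i = j ∨ (i:ℕ)+1 < (j:ℕ) ∨ (j:ℕ)+1 < (i:ℕ)) :
    σ n i * ρ n j = ρ n j * σ n i := by
  have h1 : (σw n i * ρw n j) * (ρw n j * σw n i)⁻¹ ∈ sgRels n := by
    refine Or.inr ⟨i, j, h, by group⟩
  have := mk_eq h1
  simpa only [map_mul, mk_σw, mk_ρw] using this

end SGP
namespace SGP
variable {n : ℕ}
open SingBraid

lemma ab_σ_adj {i j : Fin (n-1)} (h : (j:ℕ) = (i:ℕ)+1) :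
    Abelianization.of (σ n i) = Abelianization.of (σ n j) := by
  have h1 := congrArg (Abelianization.of (G := SG n)) (rel_braid h)
  simp only [map_mul] at h1
  rw [mul_comm (Abelianization.of (σ n j)) (Abelianization.of (σ n i))] at h1
  exact mul_left_cancel h1

lemma ab_ρ_adj {i j : Fin (n-1)} (h : (j:ℕ) = (i:ℕ)+1) :
    Abelianization.of (ρ n i) = Abelianization.of (ρ n j) := by
  have h1 := congrArg (Abelianization.of (G := SG n)) (rel_rss h)
  simp only [map_mul] at h1
  rw [mul_rotate] at h1
  exact mul_left_cancel h1

lemma ab_σ_all (hn : 3 ≤ n) (i j : Fin (n-1)) :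
    Abelianization.of (σ n i) = Abelianization.of (σ n j) := by
  have h0 : 0 < n - 1 := by omega
  have aux : ∀ k (hk : k < n - 1),
      Abelianization.of (σ n ⟨k, hk⟩) = Abelianization.of (σ n ⟨0, h0⟩) := by
    intro k
    induction k with
    | zero => intro hk; rfl
    | succ m ih =>
      intro hk
      have hm : m < n - 1 := by omega
      have := ab_σ_adj (i := (⟨m, hm⟩ : Fin (n-1))) (j := ⟨m+1, hk⟩) rfl
      rw [← this]; exact ih hm
  have hi := aux i.val i.2
  have hj := aux j.val j.2
  simp only [Fin.eta] at hi hj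
  rw [hi, hj]

lemma ab_ρ_all (hn : 3 ≤ n) (i j : Fin (n-1)) :
    Abelianization.of (ρ n i) = Abelianization.of (ρ n j) := by
  have h0 : 0 < n - 1 := by omega
  have aux : ∀ k (hk : k < n - 1),
      Abelianization.of (ρ n ⟨k, hk⟩) = Abelianization.of (ρ n ⟨0, h0⟩) := by
    intro k
    induction k with
    | zero => intro hk; rfl
    | succ m ih =>
      intro hk
      have hm : m < n - 1 := by omega
      have := ab_ρ_adj (i := (⟨m, hm⟩ : Fin (n-1))) (j := ⟨m+1, hk⟩) rfl
      rw [← this]; exact ih hm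
  have hi := aux i.val i.2
  have hj := aux j.val j.2
  simp only [Fin.eta] at hi hj
  rw [hi, hj]

lemma inv_mul_mem {x y : SG n} (h : Abelianization.of x = Abelianization.of y) :
    x⁻¹ * y ∈ commutator (SG n) := by
  have h1 : Abelianization.of (x⁻¹ * y) = 1 := by
    rw [map_mul, map_inv, h, inv_mul_cancel]
  exact (QuotientGroup.eq_one_iff _).mp h1

end SGP
namespace SGP
open SingBraid

/-- Abstract core: in any group, generators `s i`, `r i` satisfying the singular braid
relations, such that all "difference" elements lie in a commuting, conjugation-closed
class `P`, must all commute. -/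
lemma abstract_core {Q : Type*} [Group Q] {m : ℕ} (hm : 4 ≤ m) (s r : Fin m → Q)
    (P : Q → Prop)
    (hPs : ∀ i j, P ((s i)⁻¹ * s j))
    (hPconj : ∀ (g : Q) {c : Q}, P c → P (g⁻¹ * c * g))
    (hPcomm : ∀ {a b : Q}, P a → P b → a * b = b * a)
    (hss : ∀ i j : Fin m, ((i:ℕ)+1 < (j:ℕ) ∨ (j:ℕ)+1 < (i:ℕ)) → s i * s j = s j * s i)
    (hbraid : ∀ i j : Fin m, (j:ℕ) = (i:ℕ)+1 → s i * s j * s i = s j * s i * s j)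
    (hrss : ∀ i j : Fin m, (j:ℕ) = (i:ℕ)+1 → r i * s j * s i = s j * s i * r j)
    (hsr : ∀ i, s i * r i = r i * s i) :
    (∀ i j, s i * s j = s j * s i) ∧ (∀ i j, s i * r j = r j * s i) ∧
      (∀ i j, r i * r j = r j * r i) := by
  have h0m : 0 < m := by omega
  set j0 : Fin m := ⟨0, by omega⟩ with hj0
  set j1 : Fin m := ⟨1, by omega⟩ with hj1
  set j3 : Fin m := ⟨3, by omega⟩ with hj3
  have hval0 : (j0:ℕ) = 0 := rfl
  have hval1 : (j1:ℕ) = 1 := rfl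
  have hval3 : (j3:ℕ) = 3 := rfl
  set s0 := s j0 with hs0
  have hfix2 : ∀ i : Fin m, 2 ≤ (i:ℕ) →
      s0 * (s0⁻¹ * s i) = (s0⁻¹ * s i) * s0 := by
    intro i hv
    have hc := hss j0 i (Or.inl (by rw [hval0]; omega))
    rw [mul_inv_cancel_left, mul_assoc, ← hc, inv_mul_cancel_left]
  have hfixed : ∀ i : Fin m, s0 * (s0⁻¹ * s i) = (s0⁻¹ * s i) * s0 := by
    intro i
    rcases Nat.lt_or_ge (i:ℕ) 2 with hv | hv
    · rcases Nat.lt_or_ge (i:ℕ) 1 with hv0 | hv1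
      · have hii : i = j0 := Fin.ext (by rw [hval0]; omega)
        rw [hii]; rw [← hs0]; group
      · have hii : i = j1 := Fin.ext (by rw [hval1]; omega)
        rw [hii]
        set u := s j1 with hu
        set w := s j3 with hw
        set a := s0⁻¹ * u with ha
        set b := s0⁻¹ * w with hb
        have h13 : u * w = w * u := hss j1 j3 (Or.inl (by rw [hval1, hval3]; omega))
        have hbs : s0 * b = b * s0 := hfix2 j3 (by rw [hval3]; omega)
        set a' := s0⁻¹ * a * s0 with ha'
        have ha's : a * s0 = s0 * a' := by rw [ha']; group
        have hab' : a' * b = b * a' :=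
          hPcomm (hPconj s0 (hPs j0 j1)) (hPs j0 j3)
        have hu' : u = s0 * a := by rw [ha, mul_inv_cancel_left]
        have hw' : w = s0 * b := by rw [hb, mul_inv_cancel_left]
        have step : s0 * (s0 * (a' * b)) = s0 * (s0 * (b * a)) := by
          calc s0 * (s0 * (a' * b)) = s0 * ((s0 * a') * b) := by simp only [mul_assoc]
            _ = s0 * ((a * s0) * b) := by rw [← ha's]
            _ = (s0 * a) * (s0 * b) := by simp only [mul_assoc]
            _ = (s0 * b) * (s0 * a) := by rw [← hu', ← hw']; exact h13
            _ = s0 * ((b * s0) * a) := by simp only [mul_assoc]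
            _ = s0 * ((s0 * b) * a) := by rw [hbs]
            _ = s0 * (s0 * (b * a)) := by simp only [mul_assoc]
        have h4 : a' = a :=
          mul_left_cancel (a := b)
            (by rw [← hab']; exact mul_left_cancel (mul_left_cancel step))
        rw [ha's, h4]
    · exact hfix2 i hv
  have hscomm : ∀ i : Fin m, s0 * s i = s i * s0 := by
    intro i
    have h2 := hfixed i
    rw [mul_inv_cancel_left] at h2
    calc s0 * s i = s0 * (s0⁻¹ * s i * s0) := by rw [← h2]
      _ = s i * s0 := by group
  have hSall : ∀ i : Fin m, s i = s0 := by
    have aux : ∀ k (hk : k < m), s ⟨k, hk⟩ = s0 := by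
      intro k
      induction k with
      | zero => intro hk; rfl
      | succ p ih =>
        intro hk
        have hp : p < m := by omega
        have hb := hbraid ⟨p, hp⟩ ⟨p+1, hk⟩ rfl
        rw [ih hp] at hb
        rw [hscomm ⟨p+1, hk⟩] at hb
        exact (mul_left_cancel hb).symm
    intro i
    have := aux i.val i.2
    simpa only [Fin.eta] using this
  have hsrAll : ∀ i j, s i * r j = r j * s i := by
    intro i j
    rw [hSall i, ← hSall j]
    exact hsr j
  have hRall : ∀ i : Fin m, r i = r j0 := by
    have aux : ∀ k (hk : k < m), r ⟨k, hk⟩ = r j0 := by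
      intro k
      induction k with
      | zero => intro hk; rfl
      | succ p ih =>
        intro hk
        have hp : p < m := by omega
        have hb := hrss ⟨p, hp⟩ ⟨p+1, hk⟩ rfl
        rw [← hsrAll ⟨p+1, hk⟩ ⟨p, hp⟩, mul_assoc, ← hsrAll ⟨p, hp⟩ ⟨p, hp⟩, ← mul_assoc] at hb
        have h5 := mul_left_cancel hb
        rw [← h5]
        exact ih hp
    intro i
    have := aux i.val i.2
    simpa only [Fin.eta] using this
  refine ⟨fun i j => by rw [hSall i, hSall j], hsrAll, fun i j => by rw [hRall i, hRall j]⟩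

end SGP
namespace SGP
open SingBraid

set_option maxHeartbeats 1000000 in
lemma key (n : ℕ) (hn5 : 5 ≤ n) :
    commutator (SG n) ≤ ⁅commutator (SG n), commutator (SG n)⁆ := by
  have hn : 3 ≤ n := by omega
  haveI hNnormal : (⁅commutator (SG n), commutator (SG n)⁆ : Subgroup (SG n)).Normal :=
    Subgroup.commutator_normal _ _
  set N : Subgroup (SG n) := ⁅commutator (SG n), commutator (SG n)⁆ with hN
  set π : SG n →* SG n ⧸ N := QuotientGroup.mk' N with hπ
  -- the class of images of the commutator subgroup
  set P : (SG n ⧸ N) → Prop := fun q => ∃ c ∈ commutator (SG n), π c = q with hP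
  have hPs : ∀ i j : Fin (n-1), P ((π (σ n i))⁻¹ * π (σ n j)) := by
    intro i j
    exact ⟨(σ n i)⁻¹ * σ n j, inv_mul_mem (ab_σ_all hn i j), by rw [map_mul, map_inv]⟩
  have hPconj : ∀ (g : SG n ⧸ N) {c : SG n ⧸ N}, P c → P (g⁻¹ * c * g) := by
    intro g c hc
    obtain ⟨c', hc', rfl⟩ := hc
    obtain ⟨y, rfl⟩ := QuotientGroup.mk'_surjective N g
    refine ⟨y⁻¹ * c' * y, ?_, by rw [map_mul, map_mul, map_inv]⟩
    simpa [commutator_def] using (Subgroup.commutator_normal ⊤ ⊤).conj_mem c' hc' y⁻¹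
  have hPcomm : ∀ {a b : SG n ⧸ N}, P a → P b → a * b = b * a := by
    rintro a b ⟨a', ha', rfl⟩ ⟨b', hb', rfl⟩
    have h1 : π ⁅a', b'⁆ = 1 :=
      (QuotientGroup.eq_one_iff _).mpr (Subgroup.commutator_mem_commutator ha' hb')
    rw [map_commutatorElement, commutatorElement_eq_one_iff_commute] at h1
    exact h1
  obtain ⟨hSS, hSR, hRR⟩ := abstract_core (m := n-1) (by omega)
    (fun i => π (σ n i)) (fun i => π (ρ n i)) P hPs hPconj hPcomm
    (fun i j h => by
      have := congrArg π (rel_ss (n := n) (i := i) (j := j) h)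
      simpa only [map_mul] using this)
    (fun i j h => by
      have := congrArg π (rel_braid (n := n) (i := i) (j := j) h)
      simpa only [map_mul] using this)
    (fun i j h => by
      have := congrArg π (rel_rss (n := n) (i := i) (j := j) h)
      simpa only [map_mul] using this)
    (fun i => by
      have := congrArg π (rel_sr (n := n) (i := i) (j := i) (Or.inl rfl))
      simpa only [map_mul] using this)
  -- all generator images commute
  have hgen : ∀ x y : Fin (n-1) ⊕ Fin (n-1),
      π (PresentedGroup.of x) * π (PresentedGroup.of y)
        = π (PresentedGroup.of y) * π (PresentedGroup.of x) := by
    rintro (i | i) (j | j)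
    · exact hSS i j
    · exact hSR i j
    · exact (hSR j i).symm
    · exact hRR i j
  -- every image is central
  have hcent : ∀ x : SG n, π x ∈ Subgroup.center (SG n ⧸ N) := by
    intro x
    refine PresentedGroup.generated_by _ (Subgroup.comap π (Subgroup.center _)) (fun j => ?_) x
    rw [Subgroup.mem_comap, Subgroup.mem_center_iff]
    intro g
    obtain ⟨y, rfl⟩ := QuotientGroup.mk'_surjective N g
    have hy : y ∈ Subgroup.comap π (Subgroup.centralizer {π (PresentedGroup.of j)}) := by
      refine PresentedGroup.generated_by _ _ (fun j' => ?_) y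
      rw [Subgroup.mem_comap]
      refine Subgroup.mem_centralizer_iff.mpr ?_
      intro h hh
      rw [Set.mem_singleton_iff] at hh
      rw [hh]
      exact hgen j j'
    have := Subgroup.mem_centralizer_iff.mp (Subgroup.mem_comap.mp hy)
      (π (PresentedGroup.of j)) rfl
    exact this.symm
  -- conclude
  rw [commutator_eq_closure]
  refine (Subgroup.closure_le _).mpr ?_
  rintro x ⟨a, b, rfl⟩
  have h1 : π ⁅a, b⁆ = 1 := by
    rw [map_commutatorElement, commutatorElement_eq_one_iff_commute]
    exact Subgroup.mem_center_iff.mp (hcent b) (π a)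
  exact (QuotientGroup.eq_one_iff _).mp h1

end SGP
namespace SGP
open SingBraid

lemma perm3_solvable : IsSolvable (Equiv.Perm (Fin 3)) := by
  haveI : Fact (Nat.Prime 3) := ⟨by norm_num⟩
  have hcard : Nat.card (alternatingGroup (Fin 3)) = 3 := by
    rw [Nat.card_eq_fintype_card]; decide
  haveI : IsCyclic (alternatingGroup (Fin 3)) := isCyclic_of_prime_card hcard
  haveI : IsSolvable (alternatingGroup (Fin 3)) := by
    letI := IsCyclic.commGroup (α := alternatingGroup (Fin 3))
    exact isSolvable_of_comm fun a b => mul_comm a b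
  exact solvable_of_ker_le_range (alternatingGroup (Fin 3)).subtype Equiv.Perm.sign
    (by rw [Subgroup.range_subtype, ← alternatingGroup_eq_sign_ker])

lemma perfect_eq_bot {Pm : Type*} [Group Pm] [hs : Group.IsSolvable Pm] {H : Subgroup Pm}
    (h : ⁅H, H⁆ = H) : H = ⊥ := by
  obtain ⟨k, hk⟩ := hs.solvable
  have hle : ∀ q : ℕ, H ≤ derivedSeries Pm q := by
    intro q
    induction q with
    | zero => exact le_top
    | succ q ih =>
      rw [derivedSeries_succ, ← h]
      exact Subgroup.commutator_mono ih ih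
  exact le_bot_iff.mp (hk ▸ hle k)

lemma not_perfect_small (n : ℕ) (f : Fin (n-1) ⊕ Fin (n-1) → Equiv.Perm (Fin 3))
    (hf : ∀ r ∈ sgRels n, FreeGroup.lift f r = 1)
    (x y : Fin (n-1) ⊕ Fin (n-1)) (hxy : ¬ Commute (f x) (f y)) :
    ⁅commutator (SG n), commutator (SG n)⁆ ≠ commutator (SG n) := by
  intro h
  haveI : Group.IsSolvable (Equiv.Perm (Fin 3)) := perm3_solvable
  set ψ : SG n →* Equiv.Perm (Fin 3) := PresentedGroup.toGroup hf with hψ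
  have hmap : Subgroup.map ψ (commutator (SG n)) = ⊥ := by
    apply perfect_eq_bot (H := Subgroup.map ψ (commutator (SG n)))
    rw [← Subgroup.map_commutator, h]
  have hmem : ⁅(PresentedGroup.of x : SG n), PresentedGroup.of y⁆ ∈ commutator (SG n) := by
    rw [commutator_def]
    exact Subgroup.commutator_mem_commutator (Subgroup.mem_top _) (Subgroup.mem_top _)
  have h1 : ψ ⁅(PresentedGroup.of x : SG n), PresentedGroup.of y⁆ = 1 := by
    have h2 := Subgroup.mem_map_of_mem ψ hmem
    rwa [hmap, Subgroup.mem_bot] at h2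
  rw [map_commutatorElement] at h1
  have h3 : ψ (PresentedGroup.of x) = f x := PresentedGroup.toGroup.of hf
  have h4 : ψ (PresentedGroup.of y) = f y := PresentedGroup.toGroup.of hf
  rw [h3, h4] at h1
  exact hxy (commutatorElement_eq_one_iff_commute.mp h1)

end SGP
open SingBraid in
/-- For every integer `n ≥ 3`, the commutator subgroup of `SG_n` is perfect iff `n ≥ 5`. -/
theorem sg_commutator_perfect_iff (n : ℕ) (hn : 3 ≤ n) :
    ⁅commutator (SG n), commutator (SG n)⁆ = commutator (SG n) ↔ 5 ≤ n := by
  constructor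
  · intro h
    by_contra hlt
    push_neg at hlt
    interval_cases n
    · refine SGP.not_perfect_small 3
        (Sum.elim (fun i => if (i:ℕ) = 1 then Equiv.swap 1 2 else Equiv.swap 0 1)
          (fun i => if (i:ℕ) = 1 then Equiv.swap 1 2 else Equiv.swap 0 1))
        ?_ (Sum.inl ⟨0, by omega⟩) (Sum.inl ⟨1, by omega⟩) (fun hc => absurd hc.eq (by decide)) h
      intro r hr
      simp only [sgRels, Set.mem_union, Set.mem_setOf_eq] at hr
      rcases hr with ((((⟨i,j,hij,rfl⟩|⟨i,j,hij,rfl⟩)|⟨i,j,hij,rfl⟩)|⟨i,j,hij,rfl⟩)|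
        ⟨i,j,hij,rfl⟩)|⟨i,j,hij,rfl⟩ <;>
        fin_cases i <;> fin_cases j <;>
        first
          | (exfalso; revert hij; decide)
          | (simp only [σw, ρw, map_mul, map_inv, FreeGroup.lift_apply_of]; decide)
    · refine SGP.not_perfect_small 4
        (Sum.elim (fun i => if (i:ℕ) = 1 then Equiv.swap 1 2 else Equiv.swap 0 1)
          (fun i => if (i:ℕ) = 1 then Equiv.swap 1 2 else Equiv.swap 0 1))
        ?_ (Sum.inl ⟨0, by omega⟩) (Sum.inl ⟨1, by omega⟩) (fun hc => absurd hc.eq (by decide)) h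
      intro r hr
      simp only [sgRels, Set.mem_union, Set.mem_setOf_eq] at hr
      rcases hr with ((((⟨i,j,hij,rfl⟩|⟨i,j,hij,rfl⟩)|⟨i,j,hij,rfl⟩)|⟨i,j,hij,rfl⟩)|
        ⟨i,j,hij,rfl⟩)|⟨i,j,hij,rfl⟩ <;>
        fin_cases i <;> fin_cases j <;>
        first
          | (exfalso; revert hij; decide)
          | (simp only [σw, ρw, map_mul, map_inv, FreeGroup.lift_apply_of]; decide)
  · intro h5
    have h1 := SGP.key n h5
    have h2 : ⁅commutator (SG n), commutator (SG n)⁆ ≤ commutator (SG n) := by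
      rw [commutator_def]
      exact Subgroup.commutator_mono le_top le_top
    exact le_antisymm h2 h1
end

section
/- For every integer n ≥ 4, the commutator subgroup GVB_n' = [GVB_n, GVB_n] of the generalized virtual braid group GVB_n is finitely generated (as a subgroup of GVB_n). -/
namespace GenVirtBraid

/-- The free-group generator word for `σ_{i+1}` (0-indexed `i`). -/
def σw (n : ℕ) (i : Fin (n-1)) : FreeGroup (Fin (n-1) ⊕ Fin (n-1)) := FreeGroup.of (Sum.inl i)

/-- The free-group generator word for `ρ_{i+1}` (0-indexed `i`). -/
def ρw (n : ℕ) (i : Fin (n-1)) : FreeGroup (Fin (n-1) ⊕ Fin (n-1)) := FreeGroup.of (Sum.inr i)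

/-- Defining relators of the generalized virtual braid group `GVB_n`. -/
def gvbRels (n : ℕ) : Set (FreeGroup (Fin (n-1) ⊕ Fin (n-1))) :=
  {r | ∃ i j : Fin (n-1), ((i:ℕ)+1 < (j:ℕ) ∨ (j:ℕ)+1 < (i:ℕ)) ∧
      r = σw n i * σw n j * (σw n i)⁻¹ * (σw n j)⁻¹} ∪
  {r | ∃ i j : Fin (n-1), (j:ℕ) = (i:ℕ)+1 ∧
      r = σw n i * σw n j * σw n i * (σw n j * σw n i * σw n j)⁻¹} ∪
  {r | ∃ i j : Fin (n-1), ((i:ℕ)+1 < (j:ℕ) ∨ (j:ℕ)+1 < (i:ℕ)) ∧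
      r = ρw n i * ρw n j * (ρw n i)⁻¹ * (ρw n j)⁻¹} ∪
  {r | ∃ i j : Fin (n-1), (j:ℕ) = (i:ℕ)+1 ∧
      r = ρw n i * ρw n j * ρw n i * (ρw n j * ρw n i * ρw n j)⁻¹} ∪
  {r | ∃ i j : Fin (n-1), (j:ℕ) = (i:ℕ)+1 ∧
      r = ρw n i * σw n j * σw n i * (σw n j * σw n i * ρw n j)⁻¹} ∪
  {r | ∃ i j : Fin (n-1), (j:ℕ) = (i:ℕ)+1 ∧
      r = ρw n j * σw n i * σw n j * (σw n i * σw n j * ρw n i)⁻¹} ∪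
  {r | ∃ i j : Fin (n-1), ((i:ℕ)+1 < (j:ℕ) ∨ (j:ℕ)+1 < (i:ℕ)) ∧
      r = σw n i * ρw n j * (σw n i)⁻¹ * (ρw n j)⁻¹}

/-- The generalized virtual braid group `GVB_n` (Fang's presentation). -/
abbrev GVB (n : ℕ) := PresentedGroup (gvbRels n)

/-- The generator `σ_{i+1}` of `GVB_n` (0-indexed `i`). -/
def σ (n : ℕ) (i : Fin (n-1)) : GVB n := PresentedGroup.of (Sum.inl i)

/-- The generator `ρ_{i+1}` of `GVB_n` (0-indexed `i`). -/
def ρ (n : ℕ) (i : Fin (n-1)) : GVB n := PresentedGroup.of (Sum.inr i)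

end GenVirtBraid

namespace GVBProof
open GenVirtBraid Subgroup

variable {n : ℕ}

lemma rel_eq_one {r : FreeGroup (Fin (n-1) ⊕ Fin (n-1))} (h : r ∈ gvbRels n) :
    PresentedGroup.mk (gvbRels n) r = 1 :=
  (QuotientGroup.eq_one_iff r).mpr (Subgroup.subset_normalClosure h)

lemma mk_σw (i : Fin (n-1)) : PresentedGroup.mk (gvbRels n) (σw n i) = σ n i := rfl
lemma mk_ρw (i : Fin (n-1)) : PresentedGroup.mk (gvbRels n) (ρw n i) = ρ n i := rfl

lemma comm_σσ (i j : Fin (n-1)) (hij : (i:ℕ)+1 < (j:ℕ) ∨ (j:ℕ)+1 < (i:ℕ)) :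
    σ n i * σ n j = σ n j * σ n i := by
  have e := rel_eq_one (n := n)
    (Or.inl <| Or.inl <| Or.inl <| Or.inl <| Or.inl <| Or.inl <| ⟨i, j, hij, rfl⟩)
  simp only [map_mul, map_inv, mk_σw, mk_ρw] at e
  rw [mul_inv_eq_one, mul_inv_eq_iff_eq_mul] at e
  exact e

lemma braid_σσ (i j : Fin (n-1)) (hij : (j:ℕ) = (i:ℕ)+1) :
    σ n i * σ n j * σ n i = σ n j * σ n i * σ n j := by
  have e := rel_eq_one (n := n)
    (Or.inl <| Or.inl <| Or.inl <| Or.inl <| Or.inl <| Or.inr <| ⟨i, j, hij, rfl⟩)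
  simp only [map_mul, map_inv, mk_σw, mk_ρw] at e
  rw [mul_inv_eq_one] at e
  exact e

lemma comm_ρρ (i j : Fin (n-1)) (hij : (i:ℕ)+1 < (j:ℕ) ∨ (j:ℕ)+1 < (i:ℕ)) :
    ρ n i * ρ n j = ρ n j * ρ n i := by
  have e := rel_eq_one (n := n)
    (Or.inl <| Or.inl <| Or.inl <| Or.inl <| Or.inr <| ⟨i, j, hij, rfl⟩)
  simp only [map_mul, map_inv, mk_σw, mk_ρw] at e
  rw [mul_inv_eq_one, mul_inv_eq_iff_eq_mul] at e
  exact e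

lemma braid_ρρ (i j : Fin (n-1)) (hij : (j:ℕ) = (i:ℕ)+1) :
    ρ n i * ρ n j * ρ n i = ρ n j * ρ n i * ρ n j := by
  have e := rel_eq_one (n := n)
    (Or.inl <| Or.inl <| Or.inl <| Or.inr <| ⟨i, j, hij, rfl⟩)
  simp only [map_mul, map_inv, mk_σw, mk_ρw] at e
  rw [mul_inv_eq_one] at e
  exact e

lemma mixed₁ (i j : Fin (n-1)) (hij : (j:ℕ) = (i:ℕ)+1) :
    ρ n i * σ n j * σ n i = σ n j * σ n i * ρ n j := by
  have e := rel_eq_one (n := n)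
    (Or.inl <| Or.inl <| Or.inr <| ⟨i, j, hij, rfl⟩)
  simp only [map_mul, map_inv, mk_σw, mk_ρw] at e
  rw [mul_inv_eq_one] at e
  exact e

lemma mixed₂ (i j : Fin (n-1)) (hij : (j:ℕ) = (i:ℕ)+1) :
    ρ n j * σ n i * σ n j = σ n i * σ n j * ρ n i := by
  have e := rel_eq_one (n := n)
    (Or.inl <| Or.inr <| ⟨i, j, hij, rfl⟩)
  simp only [map_mul, map_inv, mk_σw, mk_ρw] at e
  rw [mul_inv_eq_one] at e
  exact e

lemma comm_σρ (i j : Fin (n-1)) (hij : (i:ℕ)+1 < (j:ℕ) ∨ (j:ℕ)+1 < (i:ℕ)) :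
    σ n i * ρ n j = ρ n j * σ n i := by
  have e := rel_eq_one (n := n)
    (Or.inr <| ⟨i, j, hij, rfl⟩)
  simp only [map_mul, map_inv, mk_σw, mk_ρw] at e
  rw [mul_inv_eq_one, mul_inv_eq_iff_eq_mul] at e
  exact e
section
variable (n : ℕ) (hn : 4 ≤ n)

/-- `a = σ₀`. -/
def aa : GVB n := σ n ⟨0, by omega⟩
/-- `b = ρ₂`. -/
def bb : GVB n := ρ n ⟨2, by omega⟩

def xx (i : Fin (n-1)) : GVB n := σ n i * (aa n hn)⁻¹
def yy (i : Fin (n-1)) : GVB n := ρ n i * (bb n hn)⁻¹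

def cc (m k : ℤ) : GVB n := (aa n hn)^m * (bb n hn)^k
def TT (m k : ℤ) (g : GVB n) : GVB n := cc n hn m k * g * (cc n hn m k)⁻¹

lemma hab : aa n hn * bb n hn = bb n hn * aa n hn := by
  apply comm_σρ; left; norm_num

lemma cc_mul (m k m' k' : ℤ) : cc n hn m k * cc n hn m' k' = cc n hn (m+m') (k+k') := by
  have h : Commute (aa n hn) (bb n hn) := hab n hn
  simp only [cc]
  rw [mul_assoc, ← mul_assoc ((bb n hn)^k), (h.symm.zpow_zpow k m').eq]
  rw [zpow_add, zpow_add]; group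

lemma TT_mul (m k : ℤ) (g h : GVB n) :
    TT n hn m k (g * h) = TT n hn m k g * TT n hn m k h := by simp only [TT]; group

lemma TT_inv (m k : ℤ) (g : GVB n) : TT n hn m k g⁻¹ = (TT n hn m k g)⁻¹ := by
  simp only [TT]; group

lemma TT_one (m k : ℤ) : TT n hn m k 1 = 1 := by simp only [TT]; group

lemma TT_comp (m k m' k' : ℤ) (g : GVB n) :
    TT n hn m k (TT n hn m' k' g) = TT n hn (m+m') (k+k') g := by
  simp only [TT, ← cc_mul n hn m k m' k']; group

lemma TT_zero (g : GVB n) : TT n hn 0 0 g = g := by simp [TT, cc]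

end
def i₀ (n : ℕ) (hn : 4 ≤ n) : Fin (n-1) := ⟨0, by omega⟩
def i₁ (n : ℕ) (hn : 4 ≤ n) : Fin (n-1) := ⟨1, by omega⟩
def i₂ (n : ℕ) (hn : 4 ≤ n) : Fin (n-1) := ⟨2, by omega⟩

section
variable (n : ℕ) (hn : 4 ≤ n)


lemma aa_def : aa n hn = σ n (i₀ n hn) := rfl
lemma bb_def : bb n hn = ρ n (i₂ n hn) := rfl

lemma pb1 (z : GVB n) : bb n hn * (aa n hn * z) = aa n hn * (bb n hn * z) := by
  rw [← mul_assoc, ← hab n hn, mul_assoc]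
lemma pb2 (z : GVB n) : bb n hn * ((aa n hn)⁻¹ * z) = (aa n hn)⁻¹ * (bb n hn * z) := by
  have h : bb n hn * (aa n hn)⁻¹ = (aa n hn)⁻¹ * bb n hn := by
    calc bb n hn * (aa n hn)⁻¹ = (aa n hn)⁻¹ * (aa n hn * bb n hn) * (aa n hn)⁻¹ := by group
    _ = (aa n hn)⁻¹ * (bb n hn * aa n hn) * (aa n hn)⁻¹ := by rw [hab]
    _ = (aa n hn)⁻¹ * bb n hn := by group
  rw [← mul_assoc, h, mul_assoc]
lemma pb3 (z : GVB n) : (bb n hn)⁻¹ * (aa n hn * z) = aa n hn * ((bb n hn)⁻¹ * z) := by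
  have h : (bb n hn)⁻¹ * aa n hn = aa n hn * (bb n hn)⁻¹ := by
    calc (bb n hn)⁻¹ * aa n hn = (bb n hn)⁻¹ * (aa n hn * bb n hn) * (bb n hn)⁻¹ := by group
    _ = (bb n hn)⁻¹ * (bb n hn * aa n hn) * (bb n hn)⁻¹ := by rw [hab]
    _ = aa n hn * (bb n hn)⁻¹ := by group
  rw [← mul_assoc, h, mul_assoc]
lemma pb4 (z : GVB n) : (bb n hn)⁻¹ * ((aa n hn)⁻¹ * z) = (aa n hn)⁻¹ * ((bb n hn)⁻¹ * z) := by
  have h : (bb n hn)⁻¹ * (aa n hn)⁻¹ = (aa n hn)⁻¹ * (bb n hn)⁻¹ := by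
    calc (bb n hn)⁻¹ * (aa n hn)⁻¹ = (aa n hn * bb n hn)⁻¹ := by group
    _ = (bb n hn * aa n hn)⁻¹ := by rw [hab]
    _ = (aa n hn)⁻¹ * (bb n hn)⁻¹ := by group
  rw [← mul_assoc, h, mul_assoc]
lemma pb1' : bb n hn * aa n hn = aa n hn * bb n hn := (hab n hn).symm
lemma pb2' : bb n hn * (aa n hn)⁻¹ = (aa n hn)⁻¹ * bb n hn := by
  have := pb2 n hn 1; simpa using this
lemma pb3' : (bb n hn)⁻¹ * aa n hn = aa n hn * (bb n hn)⁻¹ := by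
  have := pb3 n hn 1; simpa using this
lemma pb4' : (bb n hn)⁻¹ * (aa n hn)⁻¹ = (aa n hn)⁻¹ * (bb n hn)⁻¹ := by
  have := pb4 n hn 1; simpa using this

/-- two as zpow -/
lemma zpow_two' (g : GVB n) : g ^ (2:ℤ) = g * g := by
  rw [show (2:ℤ) = 1 + 1 by norm_num, zpow_add, zpow_one]

end
section generic
variable {G' : Type*} [Group G'] {p q : G'}

lemma pass₁ (h : Commute p q) (z : G') : p * (q * z) = q * (p * z) := by
  rw [← mul_assoc, h.eq, mul_assoc]
lemma pass₂ (h : Commute p q) (z : G') : p * (q⁻¹ * z) = q⁻¹ * (p * z) := pass₁ h.inv_right z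
lemma pass₃ (h : Commute p q) (z : G') : p⁻¹ * (q * z) = q * (p⁻¹ * z) := pass₁ h.inv_left z
lemma pass₄ (h : Commute p q) (z : G') : p⁻¹ * (q⁻¹ * z) = q⁻¹ * (p⁻¹ * z) :=
  pass₁ h.inv_left.inv_right z
lemma swp₁ (h : Commute p q) : p * q = q * p := h.eq
lemma swp₂ (h : Commute p q) : p * q⁻¹ = q⁻¹ * p := h.inv_right.eq
lemma swp₃ (h : Commute p q) : p⁻¹ * q = q * p⁻¹ := h.inv_left.eq
lemma swp₄ (h : Commute p q) : p⁻¹ * q⁻¹ = q⁻¹ * p⁻¹ := h.inv_left.inv_right.eq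

end generic

section base
variable (n : ℕ) (hn : 4 ≤ n)

lemma hab_c : Commute (aa n hn) (bb n hn) := hab n hn

/-- `σ₀` commutes with `σ_i` for `i ≥ 2`. -/
lemma haσ (i : Fin (n-1)) (hi : 1 < (i:ℕ)) : Commute (aa n hn) (σ n i) :=
  comm_σσ (i₀ n hn) i (Or.inl (by simpa [i₀] using hi))
/-- `σ₀` commutes with `ρ_j` for `j ≥ 2`. -/
lemma haρ (j : Fin (n-1)) (hj : 1 < (j:ℕ)) : Commute (aa n hn) (ρ n j) :=
  comm_σρ (i₀ n hn) j (Or.inl (by simpa [i₀] using hj))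
/-- `ρ₂` commutes with `σ_i` for `i ≥ 4` and `i = 0`. -/
lemma hbσ (i : Fin (n-1)) (hi : 3 < (i:ℕ) ∨ (i:ℕ)+1 < 2) : Commute (σ n i) (bb n hn) :=
  comm_σρ i (i₂ n hn) (by rcases hi with h|h; · right; simpa [i₂] using h
                          · left; simpa [i₂] using h)
/-- `ρ₂` commutes with `ρ_j` for `j ≥ 4` and `j = 0`. -/
lemma hbρ (j : Fin (n-1)) (hj : 3 < (j:ℕ) ∨ (j:ℕ)+1 < 2) : Commute (bb n hn) (ρ n j) :=
  comm_ρρ (i₂ n hn) j (by rcases hj with h|h; · left; simpa [i₂] using h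
                          · right; simpa [i₂] using h)

lemma base_A : TT n hn 1 0 (xx n hn (i₁ n hn)) =
    xx n hn (i₁ n hn) * TT n hn 2 0 (xx n hn (i₁ n hn)) := by
  have h : aa n hn * σ n (i₁ n hn) * aa n hn
      = σ n (i₁ n hn) * aa n hn * σ n (i₁ n hn) := braid_σσ (i₀ n hn) (i₁ n hn) rfl
  simp only [TT, cc, xx, zpow_one, zpow_zero, mul_one, zpow_two']
  trans (aa n hn * σ n (i₁ n hn) * aa n hn) * ((aa n hn)⁻¹ * (aa n hn)⁻¹ * (aa n hn)⁻¹)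
  · group
  rw [h]; group

lemma base_D : TT n hn 0 1 (yy n hn (i₁ n hn)) =
    yy n hn (i₁ n hn) * TT n hn 0 2 (yy n hn (i₁ n hn)) := by
  have h : ρ n (i₁ n hn) * bb n hn * ρ n (i₁ n hn)
      = bb n hn * ρ n (i₁ n hn) * bb n hn := braid_ρρ (i₁ n hn) (i₂ n hn) rfl
  simp only [TT, cc, yy, zpow_one, zpow_zero, one_mul, zpow_two']
  trans (bb n hn * ρ n (i₁ n hn) * bb n hn) * ((bb n hn)⁻¹ * (bb n hn)⁻¹ * (bb n hn)⁻¹)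
  · group
  rw [← h]; group

end base
section base2
variable (n : ℕ) (hn : 4 ≤ n)

lemma xx₀ : xx n hn (i₀ n hn) = 1 := mul_inv_cancel _
lemma yy₂ : yy n hn (i₂ n hn) = 1 := mul_inv_cancel _

lemma base_P4 : TT n hn 2 0 (yy n hn (i₁ n hn)) =
    (xx n hn (i₁ n hn))⁻¹ * yy n hn (i₀ n hn) * TT n hn 0 1 (xx n hn (i₁ n hn)) := by
  have h1 : ρ n (i₀ n hn) * σ n (i₁ n hn) * aa n hn
      = σ n (i₁ n hn) * aa n hn * ρ n (i₁ n hn) := mixed₁ _ _ rfl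
  have key : aa n hn * ρ n (i₁ n hn) * (aa n hn)⁻¹
      = (σ n (i₁ n hn))⁻¹ * ρ n (i₀ n hn) * σ n (i₁ n hn) := by
    calc aa n hn * ρ n (i₁ n hn) * (aa n hn)⁻¹
        = (σ n (i₁ n hn))⁻¹ * (σ n (i₁ n hn) * aa n hn * ρ n (i₁ n hn)) * (aa n hn)⁻¹ := by group
    _ = (σ n (i₁ n hn))⁻¹ * (ρ n (i₀ n hn) * σ n (i₁ n hn) * aa n hn) * (aa n hn)⁻¹ := by
        rw [← h1]
    _ = (σ n (i₁ n hn))⁻¹ * ρ n (i₀ n hn) * σ n (i₁ n hn) := by group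
  simp only [TT, cc, xx, yy, zpow_one, zpow_zero, mul_one, one_mul, zpow_two', mul_inv_rev,
    inv_inv, mul_assoc, pass₄ (hab_c n hn).symm, swp₄ (hab_c n hn).symm, inv_mul_cancel_left,
    mul_inv_cancel_left]
  trans (aa n hn * ((aa n hn * ρ n (i₁ n hn) * (aa n hn)⁻¹) * ((aa n hn)⁻¹ * (bb n hn)⁻¹)))
  · group
  rw [key]; group

lemma base_P5 : TT n hn 2 0 (yy n hn (i₀ n hn)) =
    (TT n hn 1 0 (xx n hn (i₁ n hn)))⁻¹ * yy n hn (i₁ n hn) * TT n hn 1 1 (xx n hn (i₁ n hn)) := by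
  have h1 : ρ n (i₁ n hn) * aa n hn * σ n (i₁ n hn)
      = aa n hn * σ n (i₁ n hn) * ρ n (i₀ n hn) := mixed₂ _ _ rfl
  have key : (aa n hn)⁻¹ * ρ n (i₁ n hn) * aa n hn
      = σ n (i₁ n hn) * ρ n (i₀ n hn) * (σ n (i₁ n hn))⁻¹ := by
    calc (aa n hn)⁻¹ * ρ n (i₁ n hn) * aa n hn
        = (aa n hn)⁻¹ * (ρ n (i₁ n hn) * aa n hn * σ n (i₁ n hn)) * (σ n (i₁ n hn))⁻¹ := by group
    _ = (aa n hn)⁻¹ * (aa n hn * σ n (i₁ n hn) * ρ n (i₀ n hn)) * (σ n (i₁ n hn))⁻¹ := by rw [h1]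
    _ = σ n (i₁ n hn) * ρ n (i₀ n hn) * (σ n (i₁ n hn))⁻¹ := by group
  simp only [TT, cc, xx, yy, zpow_one, zpow_zero, mul_one, one_mul, zpow_two', mul_inv_rev,
    inv_inv, mul_assoc, pass₃ (hab_c n hn).symm, pass₄ (hab_c n hn).symm, swp₃ (hab_c n hn).symm, swp₄ (hab_c n hn).symm,
    inv_mul_cancel_left, mul_inv_cancel_left]
  trans (aa n hn * (aa n hn * ((σ n (i₁ n hn))⁻¹ *
      ((σ n (i₁ n hn) * ρ n (i₀ n hn) * (σ n (i₁ n hn))⁻¹) *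
        (σ n (i₁ n hn) * ((aa n hn)⁻¹ * ((aa n hn)⁻¹ * (bb n hn)⁻¹)))))))
  · group
  rw [← key]; group

lemma base_P6 : TT n hn 0 1 (xx n hn (i₂ n hn)) =
    (yy n hn (i₁ n hn))⁻¹ * xx n hn (i₂ n hn) * TT n hn 1 0 (xx n hn (i₁ n hn)) *
      (TT n hn 1 1 (xx n hn (i₁ n hn)))⁻¹ := by
  have h1 : ρ n (i₁ n hn) * σ n (i₂ n hn) * σ n (i₁ n hn)
      = σ n (i₂ n hn) * σ n (i₁ n hn) * bb n hn := mixed₁ _ _ rfl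
  have key : ρ n (i₁ n hn) * σ n (i₂ n hn)
      = σ n (i₂ n hn) * σ n (i₁ n hn) * bb n hn * (σ n (i₁ n hn))⁻¹ := by
    calc ρ n (i₁ n hn) * σ n (i₂ n hn)
        = (ρ n (i₁ n hn) * σ n (i₂ n hn) * σ n (i₁ n hn)) * (σ n (i₁ n hn))⁻¹ := by group
    _ = (σ n (i₂ n hn) * σ n (i₁ n hn) * bb n hn) * (σ n (i₁ n hn))⁻¹ := by rw [h1]
    _ = σ n (i₂ n hn) * σ n (i₁ n hn) * bb n hn * (σ n (i₁ n hn))⁻¹ := by group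
  simp only [TT, cc, xx, yy, zpow_one, zpow_zero, mul_one, one_mul, zpow_two', mul_inv_rev,
    inv_inv, mul_assoc, pass₁ (hab_c n hn).symm, pass₂ (hab_c n hn).symm, pass₃ (hab_c n hn).symm, pass₄ (hab_c n hn).symm,
    swp₁ (hab_c n hn).symm, swp₂ (hab_c n hn).symm, swp₃ (hab_c n hn).symm, swp₄ (hab_c n hn).symm,
    inv_mul_cancel_left, mul_inv_cancel_left]
  trans (bb n hn * ((ρ n (i₁ n hn))⁻¹ * ((ρ n (i₁ n hn) * σ n (i₂ n hn)) *
      ((aa n hn)⁻¹ * (bb n hn)⁻¹))))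
  · group
  rw [key]; group

end base2
section base3
variable (n : ℕ) (hn : 4 ≤ n)

lemma base_aσ (i : Fin (n-1)) (hi : 1 < (i:ℕ)) :
    TT n hn 1 0 (xx n hn i) = xx n hn i := by
  simp only [TT, cc, xx, zpow_one, zpow_zero, mul_one, mul_assoc,
    pass₁ (haσ n hn i hi), pass₂ (hab_c n hn), swp₂ (hab_c n hn),
    mul_inv_cancel, mul_one, inv_mul_cancel_left, mul_inv_cancel_left]

lemma base_aρ (j : Fin (n-1)) (hj : 1 < (j:ℕ)) :
    TT n hn 1 0 (yy n hn j) = yy n hn j := by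
  simp only [TT, cc, yy, zpow_one, zpow_zero, mul_one, mul_assoc,
    pass₁ (haρ n hn j hj), pass₂ (hab_c n hn), swp₂ (hab_c n hn),
    mul_inv_cancel, mul_one, inv_mul_cancel_left, mul_inv_cancel_left]

lemma base_bσ (i : Fin (n-1)) (hi : 3 < (i:ℕ) ∨ (i:ℕ)+1 < 2) :
    TT n hn 0 1 (xx n hn i) = xx n hn i := by
  simp only [TT, cc, xx, zpow_one, zpow_zero, one_mul, mul_assoc,
    pass₁ (hbσ n hn i hi).symm, pass₂ (hab_c n hn).symm, swp₂ (hab_c n hn).symm,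
    mul_inv_cancel, mul_one, inv_mul_cancel_left, mul_inv_cancel_left]

lemma base_bρ (j : Fin (n-1)) (hj : 3 < (j:ℕ) ∨ (j:ℕ)+1 < 2) :
    TT n hn 0 1 (yy n hn j) = yy n hn j := by
  simp only [TT, cc, yy, zpow_one, zpow_zero, one_mul, mul_assoc,
    pass₁ (hbρ n hn j hj), mul_inv_cancel, mul_one, inv_mul_cancel_left, mul_inv_cancel_left]

lemma base_Y3 (h3 : 3 < n - 1) :
    TT n hn 0 1 (yy n hn ⟨3, h3⟩) = yy n hn ⟨3, h3⟩ * TT n hn 0 2 (yy n hn ⟨3, h3⟩) := by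
  have h : bb n hn * ρ n ⟨3, h3⟩ * bb n hn = ρ n ⟨3, h3⟩ * bb n hn * ρ n ⟨3, h3⟩ :=
    braid_ρρ (i₂ n hn) ⟨3, h3⟩ rfl
  simp only [TT, cc, yy, zpow_one, zpow_zero, one_mul, zpow_two']
  trans (bb n hn * ρ n ⟨3, h3⟩ * bb n hn) * ((bb n hn)⁻¹ * (bb n hn)⁻¹ * (bb n hn)⁻¹)
  · group
  rw [h]; group

lemma base_P12 (h3 : 3 < n - 1) :
    TT n hn 0 1 (xx n hn ⟨3, h3⟩) * TT n hn 0 1 (xx n hn (i₂ n hn)) =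
      xx n hn ⟨3, h3⟩ * xx n hn (i₂ n hn) * yy n hn ⟨3, h3⟩ := by
  have h : bb n hn * σ n ⟨3, h3⟩ * σ n (i₂ n hn)
      = σ n ⟨3, h3⟩ * σ n (i₂ n hn) * ρ n ⟨3, h3⟩ := mixed₁ (i₂ n hn) ⟨3, h3⟩ rfl
  have hc2 : Commute (aa n hn) (σ n (i₂ n hn)) := haσ n hn _ (by simp [i₂])
  have hc3 : Commute (aa n hn) (σ n ⟨3, h3⟩) := haσ n hn _ (by simp)
  have hcr3 : Commute (aa n hn) (ρ n ⟨3, h3⟩) := haρ n hn _ (by simp)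
  simp only [TT, cc, xx, yy, zpow_one, zpow_zero, one_mul, mul_one, mul_assoc,
    pass₃ hc2, pass₃ hc3, pass₃ hcr3, pass₃ (hab_c n hn), pass₄ (hab_c n hn),
    swp₃ (hab_c n hn), swp₄ (hab_c n hn),
    swp₃ hc2, swp₃ hc3, swp₃ hcr3,
    mul_inv_cancel, inv_mul_cancel, mul_one, inv_mul_cancel_left, mul_inv_cancel_left]
  trans ((bb n hn * σ n ⟨3, h3⟩ * σ n (i₂ n hn)) * ((bb n hn)⁻¹ * ((aa n hn)⁻¹ * (aa n hn)⁻¹)))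
  · group
  rw [h]; group

end base3
section gen2
variable (n : ℕ) (hn : 4 ≤ n)

lemma gA (m k : ℤ) : TT n hn (m+1) k (xx n hn (i₁ n hn)) =
    TT n hn m k (xx n hn (i₁ n hn)) * TT n hn (m+2) k (xx n hn (i₁ n hn)) := by
  have h := congrArg (TT n hn m k) (base_A n hn)
  simpa only [TT_comp, TT_mul, add_zero] using h

lemma gD (m k : ℤ) : TT n hn m (k+1) (yy n hn (i₁ n hn)) =
    TT n hn m k (yy n hn (i₁ n hn)) * TT n hn m (k+2) (yy n hn (i₁ n hn)) := by
  have h := congrArg (TT n hn m k) (base_D n hn)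
  simpa only [TT_comp, TT_mul, add_zero] using h

lemma gP4 (m k : ℤ) : TT n hn (m+2) k (yy n hn (i₁ n hn)) =
    (TT n hn m k (xx n hn (i₁ n hn)))⁻¹ * TT n hn m k (yy n hn (i₀ n hn)) *
      TT n hn m (k+1) (xx n hn (i₁ n hn)) := by
  have h := congrArg (TT n hn m k) (base_P4 n hn)
  simpa only [TT_comp, TT_mul, TT_inv, add_zero] using h

lemma gP5 (m k : ℤ) : TT n hn (m+2) k (yy n hn (i₀ n hn)) =
    (TT n hn (m+1) k (xx n hn (i₁ n hn)))⁻¹ * TT n hn m k (yy n hn (i₁ n hn)) *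
      TT n hn (m+1) (k+1) (xx n hn (i₁ n hn)) := by
  have h := congrArg (TT n hn m k) (base_P5 n hn)
  simpa only [TT_comp, TT_mul, TT_inv, add_zero] using h

lemma gP6 (m k : ℤ) : TT n hn m (k+1) (xx n hn (i₂ n hn)) =
    (TT n hn m k (yy n hn (i₁ n hn)))⁻¹ * TT n hn m k (xx n hn (i₂ n hn)) *
      TT n hn (m+1) k (xx n hn (i₁ n hn)) * (TT n hn (m+1) (k+1) (xx n hn (i₁ n hn)))⁻¹ := by
  have h := congrArg (TT n hn m k) (base_P6 n hn)
  simpa only [TT_comp, TT_mul, TT_inv, add_zero] using h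

lemma gaσ (i : Fin (n-1)) (hi : 1 < (i:ℕ)) (m k : ℤ) :
    TT n hn (m+1) k (xx n hn i) = TT n hn m k (xx n hn i) := by
  have h := congrArg (TT n hn m k) (base_aσ n hn i hi)
  simpa only [TT_comp, add_zero] using h

lemma gaρ (j : Fin (n-1)) (hj : 1 < (j:ℕ)) (m k : ℤ) :
    TT n hn (m+1) k (yy n hn j) = TT n hn m k (yy n hn j) := by
  have h := congrArg (TT n hn m k) (base_aρ n hn j hj)
  simpa only [TT_comp, add_zero] using h

lemma gbσ (i : Fin (n-1)) (hi : 3 < (i:ℕ) ∨ (i:ℕ)+1 < 2) (m k : ℤ) :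
    TT n hn m (k+1) (xx n hn i) = TT n hn m k (xx n hn i) := by
  have h := congrArg (TT n hn m k) (base_bσ n hn i hi)
  simpa only [TT_comp, add_zero] using h

lemma gbρ (j : Fin (n-1)) (hj : 3 < (j:ℕ) ∨ (j:ℕ)+1 < 2) (m k : ℤ) :
    TT n hn m (k+1) (yy n hn j) = TT n hn m k (yy n hn j) := by
  have h := congrArg (TT n hn m k) (base_bρ n hn j hj)
  simpa only [TT_comp, add_zero] using h

lemma gY3 (h3 : 3 < n - 1) (m k : ℤ) : TT n hn m (k+1) (yy n hn ⟨3, h3⟩) =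
    TT n hn m k (yy n hn ⟨3, h3⟩) * TT n hn m (k+2) (yy n hn ⟨3, h3⟩) := by
  have h := congrArg (TT n hn m k) (base_Y3 n hn h3)
  simpa only [TT_comp, TT_mul, add_zero] using h

lemma gP12 (h3 : 3 < n - 1) (m k : ℤ) :
    TT n hn m (k+1) (xx n hn ⟨3, h3⟩) * TT n hn m (k+1) (xx n hn (i₂ n hn)) =
      TT n hn m k (xx n hn ⟨3, h3⟩) * TT n hn m k (xx n hn (i₂ n hn)) *
        TT n hn m k (yy n hn ⟨3, h3⟩) := by
  have h := congrArg (TT n hn m k) (base_P12 n hn h3)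
  simpa only [TT_comp, TT_mul, add_zero] using h

/-- constancy in `m` of `TT · k (xx i₂)` etc. -/
lemma stepEq {β : Type*} {f : ℤ → β} (h : ∀ m : ℤ, f (m+1) = f m) : ∀ m, f m = f 0 := by
  intro m
  induction m using Int.induction_on with
  | zero => rfl
  | succ i ih => rw [h i]; exact ih
  | pred i ih =>
    have e : -(i:ℤ) = (-(i:ℤ)-1) + 1 := by ring
    rw [e, h] at ih; exact ih

lemma cB (m k : ℤ) : TT n hn m k (xx n hn (i₂ n hn)) = TT n hn 0 k (xx n hn (i₂ n hn)) :=
  stepEq (f := fun m => TT n hn m k (xx n hn (i₂ n hn)))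
    (fun m => gaσ n hn _ (by simp [i₂]) m k) m

lemma cC (m k : ℤ) : TT n hn m k (yy n hn (i₀ n hn)) = TT n hn m 0 (yy n hn (i₀ n hn)) :=
  stepEq (f := fun k => TT n hn m k (yy n hn (i₀ n hn)))
    (fun k => gbρ n hn _ (by simp [i₀]) m k) k

lemma cX3 (h3 : 3 < n - 1) (m k : ℤ) :
    TT n hn m k (xx n hn ⟨3, h3⟩) = TT n hn 0 k (xx n hn ⟨3, h3⟩) :=
  stepEq (f := fun m => TT n hn m k (xx n hn ⟨3, h3⟩))
    (fun m => gaσ n hn _ (by simp) m k) m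

lemma cY3 (h3 : 3 < n - 1) (m k : ℤ) :
    TT n hn m k (yy n hn ⟨3, h3⟩) = TT n hn 0 k (yy n hn ⟨3, h3⟩) :=
  stepEq (f := fun m => TT n hn m k (yy n hn ⟨3, h3⟩))
    (fun m => gaρ n hn _ (by simp) m k) m

lemma cXi (i : Fin (n-1)) (hi : 3 < (i:ℕ)) (m k : ℤ) :
    TT n hn m k (xx n hn i) = xx n hn i := by
  have h1 : TT n hn m k (xx n hn i) = TT n hn 0 k (xx n hn i) :=
    stepEq (f := fun m => TT n hn m k (xx n hn i)) (fun m => gaσ n hn _ (by omega) m k) m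
  have h2 : TT n hn 0 k (xx n hn i) = TT n hn 0 0 (xx n hn i) :=
    stepEq (f := fun k => TT n hn 0 k (xx n hn i)) (fun k => gbσ n hn _ (Or.inl hi) 0 k) k
  rw [h1, h2, TT_zero]

lemma cYi (j : Fin (n-1)) (hj : 3 < (j:ℕ)) (m k : ℤ) :
    TT n hn m k (yy n hn j) = yy n hn j := by
  have h1 : TT n hn m k (yy n hn j) = TT n hn 0 k (yy n hn j) :=
    stepEq (f := fun m => TT n hn m k (yy n hn j)) (fun m => gaρ n hn _ (by omega) m k) m
  have h2 : TT n hn 0 k (yy n hn j) = TT n hn 0 0 (yy n hn j) :=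
    stepEq (f := fun k => TT n hn 0 k (yy n hn j)) (fun k => gbρ n hn _ (Or.inl hj) 0 k) k
  rw [h1, h2, TT_zero]

end gen2
section mem1
variable (n : ℕ) (hn : 4 ≤ n)

/-- the finite generating set -/
def SS : Set (GVB n) :=
  (fun q : Fin (n-1) × (ℤ × ℤ) × Bool =>
    TT n hn q.2.1.1 q.2.1.2 (cond q.2.2 (xx n hn q.1) (yy n hn q.1))) ''
    {q | q.2.1.1 ∈ ({0,1,2,3} : Set ℤ) ∧ q.2.1.2 ∈ ({0,1,2} : Set ℤ)}

lemma SS_finite : (SS n hn).Finite := by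
  apply Set.Finite.image
  have hsub : {q : Fin (n-1) × (ℤ × ℤ) × Bool |
      q.2.1.1 ∈ ({0,1,2,3} : Set ℤ) ∧ q.2.1.2 ∈ ({0,1,2} : Set ℤ)} ⊆
      Set.univ ×ˢ ((({0,1,2,3} : Set ℤ) ×ˢ ({0,1,2} : Set ℤ)) ×ˢ Set.univ) := by
    rintro ⟨i, ⟨m, k⟩, t⟩ ⟨hm, hk⟩
    exact ⟨Set.mem_univ _, ⟨⟨hm, hk⟩, Set.mem_univ _⟩⟩
  refine Set.Finite.subset ?_ hsub
  refine Set.Finite.prod Set.finite_univ (Set.Finite.prod (Set.Finite.prod ?_ ?_) Set.finite_univ)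
  · exact (Set.finite_singleton 3).insert 2 |>.insert 1 |>.insert 0
  · exact (Set.finite_singleton 2).insert 1 |>.insert 0

def HH : Subgroup (GVB n) := Subgroup.closure (SS n hn)

lemma seedX (i : Fin (n-1)) (m k : ℤ)
    (hm : m ∈ ({0,1,2,3} : Set ℤ)) (hk : k ∈ ({0,1,2} : Set ℤ)) :
    TT n hn m k (xx n hn i) ∈ HH n hn :=
  Subgroup.subset_closure ⟨(i, (m, k), true), ⟨hm, hk⟩, rfl⟩

lemma seedY (i : Fin (n-1)) (m k : ℤ)
    (hm : m ∈ ({0,1,2,3} : Set ℤ)) (hk : k ∈ ({0,1,2} : Set ℤ)) :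
    TT n hn m k (yy n hn i) ∈ HH n hn :=
  Subgroup.subset_closure ⟨(i, (m, k), false), ⟨hm, hk⟩, rfl⟩

end mem1

section helpers
variable {G' : Type*} [Group G'] {H : Subgroup G'} {f : ℤ → G'}

lemma memRec1 (h0 : f 0 ∈ H) (up : ∀ k, f k ∈ H → f (k+1) ∈ H)
    (down : ∀ k, f (k+1) ∈ H → f k ∈ H) : ∀ k, f k ∈ H := by
  intro k
  induction k using Int.induction_on with
  | zero => exact h0
  | succ i ih => exact up _ ih
  | pred i ih =>
    apply down
    have e : (-(i:ℤ)-1) + 1 = -(i:ℤ) := by ring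
    rw [e]; exact ih

lemma memRecW2 (h0 : f 0 ∈ H) (h1 : f 1 ∈ H)
    (up : ∀ m, f m ∈ H → f (m+1) ∈ H → f (m+2) ∈ H)
    (down : ∀ m, f (m+1) ∈ H → f (m+2) ∈ H → f m ∈ H) : ∀ m, f m ∈ H := by
  have key : ∀ m : ℤ, f m ∈ H ∧ f (m+1) ∈ H := by
    intro m
    induction m using Int.induction_on with
    | zero => exact ⟨h0, h1⟩
    | succ i ih =>
      refine ⟨ih.2, ?_⟩
      have e : ((i:ℤ)+1) + 1 = (i:ℤ)+2 := by ring
      rw [e]; exact up _ ih.1 ih.2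
    | pred i ih =>
      have e1 : (-(i:ℤ)-1) + 1 = -(i:ℤ) := by ring
      have e2 : (-(i:ℤ)-1) + 2 = -(i:ℤ)+1 := by ring
      refine ⟨?_, by rw [e1]; exact ih.1⟩
      exact down _ (by rw [e1]; exact ih.1) (by rw [e2]; exact ih.2)
  exact fun m => (key m).1

lemma memRecW3 (h0 : f 0 ∈ H) (h1 : f 1 ∈ H) (h2 : f 2 ∈ H)
    (up : ∀ m, f m ∈ H → f (m+1) ∈ H → f (m+2) ∈ H → f (m+3) ∈ H)
    (down : ∀ m, f (m+1) ∈ H → f (m+2) ∈ H → f (m+3) ∈ H → f m ∈ H) : ∀ m, f m ∈ H := by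
  have key : ∀ m : ℤ, f m ∈ H ∧ f (m+1) ∈ H ∧ f (m+2) ∈ H := by
    intro m
    induction m using Int.induction_on with
    | zero => exact ⟨h0, h1, h2⟩
    | succ i ih =>
      refine ⟨ih.2.1, ?_, ?_⟩
      · have e : ((i:ℤ)+1) + 1 = (i:ℤ)+2 := by ring
        rw [e]; exact ih.2.2
      · have e : ((i:ℤ)+1) + 2 = (i:ℤ)+3 := by ring
        rw [e]; exact up _ ih.1 ih.2.1 ih.2.2
    | pred i ih =>
      have e1 : (-(i:ℤ)-1) + 1 = -(i:ℤ) := by ring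
      have e2 : (-(i:ℤ)-1) + 2 = -(i:ℤ)+1 := by ring
      have e3 : (-(i:ℤ)-1) + 3 = -(i:ℤ)+2 := by ring
      refine ⟨?_, by rw [e1]; exact ih.1, by rw [e2]; exact ih.2.1⟩
      exact down _ (by rw [e1]; exact ih.1) (by rw [e2]; exact ih.2.1) (by rw [e3]; exact ih.2.2)
  exact fun m => (key m).1

lemma memRecW4 (h0 : f 0 ∈ H) (h1 : f 1 ∈ H) (h2 : f 2 ∈ H) (h3 : f 3 ∈ H)
    (up : ∀ m, f m ∈ H → f (m+4) ∈ H)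
    (down : ∀ m, f (m+4) ∈ H → f m ∈ H) : ∀ m, f m ∈ H := by
  have key : ∀ m : ℤ, f m ∈ H ∧ f (m+1) ∈ H ∧ f (m+2) ∈ H ∧ f (m+3) ∈ H := by
    intro m
    induction m using Int.induction_on with
    | zero => exact ⟨h0, h1, h2, h3⟩
    | succ i ih =>
      refine ⟨ih.2.1, ?_, ?_, ?_⟩
      · have e : ((i:ℤ)+1) + 1 = (i:ℤ)+2 := by ring
        rw [e]; exact ih.2.2.1
      · have e : ((i:ℤ)+1) + 2 = (i:ℤ)+3 := by ring
        rw [e]; exact ih.2.2.2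
      · have e : ((i:ℤ)+1) + 3 = (i:ℤ)+4 := by ring
        rw [e]; exact up _ ih.1
    | pred i ih =>
      have e1 : (-(i:ℤ)-1) + 1 = -(i:ℤ) := by ring
      have e2 : (-(i:ℤ)-1) + 2 = -(i:ℤ)+1 := by ring
      have e3 : (-(i:ℤ)-1) + 3 = -(i:ℤ)+2 := by ring
      have e4 : (-(i:ℤ)-1) + 4 = -(i:ℤ)+3 := by ring
      refine ⟨?_, by rw [e1]; exact ih.1, by rw [e2]; exact ih.2.1, by rw [e3]; exact ih.2.2.1⟩
      exact down _ (by rw [e4]; exact ih.2.2.2)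
  exact fun m => (key m).1

end helpers
section mem2
variable (n : ℕ) (hn : 4 ≤ n)

lemma memA012 (m k : ℤ) (hk : k ∈ ({0,1,2} : Set ℤ)) :
    TT n hn m k (xx n hn (i₁ n hn)) ∈ HH n hn := by
  refine memRecW2 (f := fun m => TT n hn m k (xx n hn (i₁ n hn)))
    (seedX n hn _ 0 k (by norm_num) hk) (seedX n hn _ 1 k (by norm_num) hk) ?_ ?_ m
  · intro m hm hm1
    beta_reduce at *
    have e := gA n hn m k
    have e2 : TT n hn (m+2) k (xx n hn (i₁ n hn)) =
        (TT n hn m k (xx n hn (i₁ n hn)))⁻¹ * TT n hn (m+1) k (xx n hn (i₁ n hn)) := by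
      rw [e]; group
    rw [e2]; exact mul_mem (inv_mem hm) hm1
  · intro m hm1 hm2
    beta_reduce at *
    have e := gA n hn m k
    have e2 : TT n hn m k (xx n hn (i₁ n hn)) =
        TT n hn (m+1) k (xx n hn (i₁ n hn)) * (TT n hn (m+2) k (xx n hn (i₁ n hn)))⁻¹ := by
      rw [e]; group
    rw [e2]; exact mul_mem hm1 (inv_mem hm2)

lemma memC (m : ℤ) : TT n hn m 0 (yy n hn (i₀ n hn)) ∈ HH n hn := by
  refine memRecW4 (f := fun m => TT n hn m 0 (yy n hn (i₀ n hn)))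
    (seedY n hn _ 0 0 (by norm_num) (by norm_num)) (seedY n hn _ 1 0 (by norm_num) (by norm_num))
    (seedY n hn _ 2 0 (by norm_num) (by norm_num)) (seedY n hn _ 3 0 (by norm_num) (by norm_num))
    ?_ ?_ m
  · intro m hm
    beta_reduce at *
    have e5 := gP5 n hn (m+2) 0
    rw [show ((m+2)+2 : ℤ) = m+4 by ring, show ((m+2)+1 : ℤ) = m+3 by ring] at e5
    have e4 := gP4 n hn m 0
    rw [e5, e4]
    exact mul_mem (mul_mem (inv_mem (memA012 n hn (m+3) 0 (by norm_num)))
      (mul_mem (mul_mem (inv_mem (memA012 n hn m 0 (by norm_num))) hm)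
        (memA012 n hn m 1 (by norm_num)))) (memA012 n hn (m+3) 1 (by norm_num))
  · intro m hm
    beta_reduce at *
    have e5 := gP5 n hn (m+2) 0
    rw [show ((m+2)+2 : ℤ) = m+4 by ring, show ((m+2)+1 : ℤ) = m+3 by ring] at e5
    have e4 := gP4 n hn m 0
    have key1 : TT n hn (m+2) 0 (yy n hn (i₁ n hn)) =
        TT n hn (m+3) 0 (xx n hn (i₁ n hn)) * TT n hn (m+4) 0 (yy n hn (i₀ n hn)) *
          (TT n hn (m+3) 1 (xx n hn (i₁ n hn)))⁻¹ := by
      rw [e5]; group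
    have key2 : TT n hn m 0 (yy n hn (i₀ n hn)) =
        TT n hn m 0 (xx n hn (i₁ n hn)) * TT n hn (m+2) 0 (yy n hn (i₁ n hn)) *
          (TT n hn m 1 (xx n hn (i₁ n hn)))⁻¹ := by
      rw [e4]; group
    rw [key2, key1]
    exact mul_mem (mul_mem (memA012 n hn m 0 (by norm_num))
      (mul_mem (mul_mem (memA012 n hn (m+3) 0 (by norm_num)) hm)
        (inv_mem (memA012 n hn (m+3) 1 (by norm_num)))))
      (inv_mem (memA012 n hn m 1 (by norm_num)))

lemma Dform (m k : ℤ) : TT n hn (m+2) k (yy n hn (i₁ n hn)) =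
    (TT n hn m k (xx n hn (i₁ n hn)))⁻¹ * TT n hn m 0 (yy n hn (i₀ n hn)) *
      TT n hn m (k+1) (xx n hn (i₁ n hn)) := by
  have e := gP4 n hn m k
  rwa [cC n hn m k] at e

lemma memA (m k : ℤ) : TT n hn m k (xx n hn (i₁ n hn)) ∈ HH n hn := by
  have hC : TT n hn m 0 (yy n hn (i₀ n hn)) ∈ HH n hn := memC n hn m
  refine memRecW3 (f := fun k => TT n hn m k (xx n hn (i₁ n hn)))
    (memA012 n hn m 0 (by norm_num)) (memA012 n hn m 1 (by norm_num))
    (memA012 n hn m 2 (by norm_num)) ?_ ?_ k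
  · intro k h0 h1 h2
    beta_reduce at *
    have d0 := Dform n hn m k
    have d1 := Dform n hn m (k+1)
    rw [show ((k+1)+1 : ℤ) = k+2 by ring] at d1
    have d2 := Dform n hn m (k+2)
    rw [show ((k+2)+1 : ℤ) = k+3 by ring] at d2
    have e := gD n hn (m+2) k
    rw [d0, d1, d2] at e
    have e2 : (TT n hn m (k+2) (xx n hn (i₁ n hn)))⁻¹ * TT n hn m 0 (yy n hn (i₀ n hn)) *
        TT n hn m (k+3) (xx n hn (i₁ n hn)) =
        ((TT n hn m k (xx n hn (i₁ n hn)))⁻¹ * TT n hn m 0 (yy n hn (i₀ n hn)) *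
          TT n hn m (k+1) (xx n hn (i₁ n hn)))⁻¹ *
        ((TT n hn m (k+1) (xx n hn (i₁ n hn)))⁻¹ * TT n hn m 0 (yy n hn (i₀ n hn)) *
          TT n hn m (k+2) (xx n hn (i₁ n hn))) := by
      rw [e]; group
    have h3' : (TT n hn m (k+2) (xx n hn (i₁ n hn)))⁻¹ * TT n hn m 0 (yy n hn (i₀ n hn)) *
        TT n hn m (k+3) (xx n hn (i₁ n hn)) ∈ HH n hn := by
      rw [e2]
      exact mul_mem (inv_mem (mul_mem (mul_mem (inv_mem h0) hC) h1))
        (mul_mem (mul_mem (inv_mem h1) hC) h2)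
    have e3 : TT n hn m (k+3) (xx n hn (i₁ n hn)) =
        (TT n hn m 0 (yy n hn (i₀ n hn)))⁻¹ * (TT n hn m (k+2) (xx n hn (i₁ n hn)) *
          ((TT n hn m (k+2) (xx n hn (i₁ n hn)))⁻¹ * TT n hn m 0 (yy n hn (i₀ n hn)) *
            TT n hn m (k+3) (xx n hn (i₁ n hn)))) := by group
    rw [e3]; exact mul_mem (inv_mem hC) (mul_mem h2 h3')
  · intro k h1 h2 h3
    beta_reduce at *
    have d0 := Dform n hn m k
    have d1 := Dform n hn m (k+1)
    rw [show ((k+1)+1 : ℤ) = k+2 by ring] at d1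
    have d2 := Dform n hn m (k+2)
    rw [show ((k+2)+1 : ℤ) = k+3 by ring] at d2
    have e := gD n hn (m+2) k
    rw [d0, d1, d2] at e
    have e2 : (TT n hn m k (xx n hn (i₁ n hn)))⁻¹ * TT n hn m 0 (yy n hn (i₀ n hn)) *
        TT n hn m (k+1) (xx n hn (i₁ n hn)) =
        ((TT n hn m (k+1) (xx n hn (i₁ n hn)))⁻¹ * TT n hn m 0 (yy n hn (i₀ n hn)) *
          TT n hn m (k+2) (xx n hn (i₁ n hn))) *
        ((TT n hn m (k+2) (xx n hn (i₁ n hn)))⁻¹ * TT n hn m 0 (yy n hn (i₀ n hn)) *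
          TT n hn m (k+3) (xx n hn (i₁ n hn)))⁻¹ := by
      rw [e]; group
    have h0' : (TT n hn m k (xx n hn (i₁ n hn)))⁻¹ * TT n hn m 0 (yy n hn (i₀ n hn)) *
        TT n hn m (k+1) (xx n hn (i₁ n hn)) ∈ HH n hn := by
      rw [e2]
      exact mul_mem (mul_mem (mul_mem (inv_mem h1) hC) h2)
        (inv_mem (mul_mem (mul_mem (inv_mem h2) hC) h3))
    have e3 : TT n hn m k (xx n hn (i₁ n hn)) =
        TT n hn m 0 (yy n hn (i₀ n hn)) * TT n hn m (k+1) (xx n hn (i₁ n hn)) *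
          ((TT n hn m k (xx n hn (i₁ n hn)))⁻¹ * TT n hn m 0 (yy n hn (i₀ n hn)) *
            TT n hn m (k+1) (xx n hn (i₁ n hn)))⁻¹ := by group
    rw [e3]; exact mul_mem (mul_mem hC h1) (inv_mem h0')

lemma memD (m k : ℤ) : TT n hn m k (yy n hn (i₁ n hn)) ∈ HH n hn := by
  have d := Dform n hn (m-2) k
  rw [show ((m-2)+2 : ℤ) = m by ring] at d
  rw [d]
  exact mul_mem (mul_mem (inv_mem (memA n hn (m-2) k)) (memC n hn (m-2))) (memA n hn (m-2) (k+1))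

lemma memB (m k : ℤ) : TT n hn m k (xx n hn (i₂ n hn)) ∈ HH n hn := by
  rw [cB]
  refine memRec1 (f := fun k => TT n hn 0 k (xx n hn (i₂ n hn)))
    (seedX n hn _ 0 0 (by norm_num) (by norm_num)) ?_ ?_ k
  · intro k h
    beta_reduce at *
    have e := gP6 n hn 0 k
    rw [show ((0:ℤ)+1) = 1 by ring] at e
    rw [e]
    exact mul_mem (mul_mem (mul_mem (inv_mem (memD n hn 0 k)) h) (memA n hn 1 k))
      (inv_mem (memA n hn 1 (k+1)))
  · intro k h
    beta_reduce at *
    have e := gP6 n hn 0 k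
    rw [show ((0:ℤ)+1) = 1 by ring] at e
    have e2 : TT n hn 0 k (xx n hn (i₂ n hn)) =
        TT n hn 0 k (yy n hn (i₁ n hn)) * TT n hn 0 (k+1) (xx n hn (i₂ n hn)) *
          TT n hn 1 (k+1) (xx n hn (i₁ n hn)) * (TT n hn 1 k (xx n hn (i₁ n hn)))⁻¹ := by
      rw [e]; group
    rw [e2]
    exact mul_mem (mul_mem (mul_mem (memD n hn 0 k) h) (memA n hn 1 (k+1)))
      (inv_mem (memA n hn 1 k))

lemma memY3 (h3 : 3 < n - 1) (m k : ℤ) : TT n hn m k (yy n hn ⟨3, h3⟩) ∈ HH n hn := by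
  rw [cY3]
  refine memRecW2 (f := fun k => TT n hn 0 k (yy n hn ⟨3, h3⟩))
    (seedY n hn _ 0 0 (by norm_num) (by norm_num))
    (seedY n hn _ 0 1 (by norm_num) (by norm_num)) ?_ ?_ k
  · intro k h0 h1
    beta_reduce at *
    have e := gY3 n hn h3 0 k
    have e2 : TT n hn 0 (k+2) (yy n hn ⟨3, h3⟩) =
        (TT n hn 0 k (yy n hn ⟨3, h3⟩))⁻¹ * TT n hn 0 (k+1) (yy n hn ⟨3, h3⟩) := by
      rw [e]; group
    rw [e2]; exact mul_mem (inv_mem h0) h1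
  · intro k h1 h2
    beta_reduce at *
    have e := gY3 n hn h3 0 k
    have e2 : TT n hn 0 k (yy n hn ⟨3, h3⟩) =
        TT n hn 0 (k+1) (yy n hn ⟨3, h3⟩) * (TT n hn 0 (k+2) (yy n hn ⟨3, h3⟩))⁻¹ := by
      rw [e]; group
    rw [e2]; exact mul_mem h1 (inv_mem h2)

lemma memX3 (h3 : 3 < n - 1) (m k : ℤ) : TT n hn m k (xx n hn ⟨3, h3⟩) ∈ HH n hn := by
  rw [cX3]
  refine memRec1 (f := fun k => TT n hn 0 k (xx n hn ⟨3, h3⟩))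
    (seedX n hn _ 0 0 (by norm_num) (by norm_num)) ?_ ?_ k
  · intro k h
    beta_reduce at *
    have e := gP12 n hn h3 0 k
    have e2 : TT n hn 0 (k+1) (xx n hn ⟨3, h3⟩) =
        TT n hn 0 k (xx n hn ⟨3, h3⟩) * TT n hn 0 k (xx n hn (i₂ n hn)) *
          TT n hn 0 k (yy n hn ⟨3, h3⟩) * (TT n hn 0 (k+1) (xx n hn (i₂ n hn)))⁻¹ := by
      rw [← e]; group
    rw [e2]
    exact mul_mem (mul_mem (mul_mem h (memB n hn 0 k)) (memY3 n hn h3 0 k))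
      (inv_mem (memB n hn 0 (k+1)))
  · intro k h
    beta_reduce at *
    have e := gP12 n hn h3 0 k
    have e2 : TT n hn 0 k (xx n hn ⟨3, h3⟩) =
        TT n hn 0 (k+1) (xx n hn ⟨3, h3⟩) * TT n hn 0 (k+1) (xx n hn (i₂ n hn)) *
          (TT n hn 0 k (yy n hn ⟨3, h3⟩))⁻¹ * (TT n hn 0 k (xx n hn (i₂ n hn)))⁻¹ := by
      rw [e]; group
    rw [e2]
    exact mul_mem (mul_mem (mul_mem h (memB n hn 0 (k+1))) (inv_mem (memY3 n hn h3 0 k)))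
      (inv_mem (memB n hn 0 k))

end mem2
section mem3
variable (n : ℕ) (hn : 4 ≤ n)

lemma master (i : Fin (n-1)) (m k : ℤ) :
    TT n hn m k (xx n hn i) ∈ HH n hn ∧ TT n hn m k (yy n hn i) ∈ HH n hn := by
  obtain ⟨v, hv⟩ := i
  match v with
  | 0 =>
    constructor
    · rw [show (⟨0, hv⟩ : Fin (n-1)) = i₀ n hn from rfl, xx₀, TT_one]
      exact one_mem _
    · rw [show (⟨0, hv⟩ : Fin (n-1)) = i₀ n hn from rfl, cC]
      exact memC n hn m
  | 1 => exact ⟨memA n hn m k, memD n hn m k⟩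
  | 2 =>
    refine ⟨memB n hn m k, ?_⟩
    rw [show (⟨2, hv⟩ : Fin (n-1)) = i₂ n hn from rfl, yy₂, TT_one]
    exact one_mem _
  | 3 => exact ⟨memX3 n hn hv m k, memY3 n hn hv m k⟩
  | (w+4) =>
    constructor
    · rw [cXi n hn ⟨w+4, hv⟩ (by simp) m k]
      have h := seedX n hn ⟨w+4, hv⟩ 0 0 (by norm_num) (by norm_num)
      rwa [TT_zero] at h
    · rw [cYi n hn ⟨w+4, hv⟩ (by simp) m k]
      have h := seedY n hn ⟨w+4, hv⟩ 0 0 (by norm_num) (by norm_num)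
      rwa [TT_zero] at h

lemma TT_conj_a (m k : ℤ) (g : GVB n) :
    aa n hn * TT n hn m k g * (aa n hn)⁻¹ = TT n hn (m+1) k g := by
  have e : aa n hn * TT n hn m k g * (aa n hn)⁻¹ = TT n hn 1 0 (TT n hn m k g) := by
    simp [TT, cc]
  rw [e, TT_comp]
  congr 1 <;> ring

lemma TT_conj_b (m k : ℤ) (g : GVB n) :
    bb n hn * TT n hn m k g * (bb n hn)⁻¹ = TT n hn m (k+1) g := by
  have e : bb n hn * TT n hn m k g * (bb n hn)⁻¹ = TT n hn 0 1 (TT n hn m k g) := by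
    simp [TT, cc]
  rw [e, TT_comp]
  congr 1 <;> ring

lemma TT_conj_a' (m k : ℤ) (g : GVB n) :
    (aa n hn)⁻¹ * TT n hn m k g * aa n hn = TT n hn (m-1) k g := by
  have e := TT_conj_a n hn (m-1) k g
  rw [show (m-1)+1 = m by ring] at e
  rw [← e]; group

lemma TT_conj_b' (m k : ℤ) (g : GVB n) :
    (bb n hn)⁻¹ * TT n hn m k g * bb n hn = TT n hn m (k-1) g := by
  have e := TT_conj_b n hn m (k-1) g
  rw [show (k-1)+1 = k by ring] at e
  rw [← e]; group

lemma conj_mem_of_SS (u : GVB n)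
    (hu : ∀ s ∈ SS n hn, u * s * u⁻¹ ∈ HH n hn) :
    ∀ g ∈ HH n hn, u * g * u⁻¹ ∈ HH n hn := by
  intro g hg
  have h1 : (HH n hn).map (MulAut.conj u).toMonoidHom ≤ HH n hn := by
    rw [HH, MonoidHom.map_closure]
    refine (Subgroup.closure_le _).mpr ?_
    rintro s ⟨t, ht, rfl⟩
    simpa [HH] using hu t ht
  exact h1 ⟨g, hg, by simp⟩

lemma norm_a : aa n hn ∈ Subgroup.normalizer (HH n hn : Set (GVB n)) := by
  have h1 : ∀ g ∈ HH n hn, aa n hn * g * (aa n hn)⁻¹ ∈ HH n hn := by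
    refine conj_mem_of_SS n hn _ ?_
    rintro s ⟨⟨i, ⟨m, k⟩, tb⟩, ht, rfl⟩
    beta_reduce
    cases tb
    · rw [TT_conj_a]; exact (master n hn i (m+1) k).2
    · rw [TT_conj_a]; exact (master n hn i (m+1) k).1
  have h2 : ∀ g ∈ HH n hn, (aa n hn)⁻¹ * g * aa n hn ∈ HH n hn := by
    have := conj_mem_of_SS n hn (aa n hn)⁻¹ ?_
    · simpa using this
    rintro s ⟨⟨i, ⟨m, k⟩, tb⟩, ht, rfl⟩
    beta_reduce
    rw [inv_inv]
    cases tb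
    · rw [TT_conj_a']; exact (master n hn i (m-1) k).2
    · rw [TT_conj_a']; exact (master n hn i (m-1) k).1
  rw [Subgroup.mem_normalizer_iff]
  intro h
  constructor
  · exact h1 h
  · intro hh
    have := h2 _ hh
    have e : (aa n hn)⁻¹ * (aa n hn * h * (aa n hn)⁻¹) * aa n hn = h := by group
    rwa [e] at this

lemma norm_b : bb n hn ∈ Subgroup.normalizer (HH n hn : Set (GVB n)) := by
  have h1 : ∀ g ∈ HH n hn, bb n hn * g * (bb n hn)⁻¹ ∈ HH n hn := by
    refine conj_mem_of_SS n hn _ ?_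
    rintro s ⟨⟨i, ⟨m, k⟩, tb⟩, ht, rfl⟩
    beta_reduce
    cases tb
    · rw [TT_conj_b]; exact (master n hn i m (k+1)).2
    · rw [TT_conj_b]; exact (master n hn i m (k+1)).1
  have h2 : ∀ g ∈ HH n hn, (bb n hn)⁻¹ * g * bb n hn ∈ HH n hn := by
    have := conj_mem_of_SS n hn (bb n hn)⁻¹ ?_
    · simpa using this
    rintro s ⟨⟨i, ⟨m, k⟩, tb⟩, ht, rfl⟩
    beta_reduce
    rw [inv_inv]
    cases tb
    · rw [TT_conj_b']; exact (master n hn i m (k-1)).2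
    · rw [TT_conj_b']; exact (master n hn i m (k-1)).1
  rw [Subgroup.mem_normalizer_iff]
  intro h
  constructor
  · exact h1 h
  · intro hh
    have := h2 _ hh
    have e : (bb n hn)⁻¹ * (bb n hn * h * (bb n hn)⁻¹) * bb n hn = h := by group
    rwa [e] at this

lemma cc_mem_normalizer (m k : ℤ) : cc n hn m k ∈ Subgroup.normalizer (HH n hn : Set (GVB n)) :=
  mul_mem (zpow_mem (norm_a n hn) m) (zpow_mem (norm_b n hn) k)

end mem3
section phi
variable (n : ℕ) (hn : 4 ≤ n)

/-- abelianization target map on generators -/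
def fφ : Fin (n-1) ⊕ Fin (n-1) → Multiplicative (ℤ × ℤ) :=
  Sum.elim (fun _ => Multiplicative.ofAdd (1,0)) (fun _ => Multiplicative.ofAdd (0,1))

lemma hrels : ∀ r ∈ gvbRels n, FreeGroup.lift (fφ n) r = 1 := by
  rintro r ((((((⟨i,j,hij,rfl⟩|⟨i,j,hij,rfl⟩)|⟨i,j,hij,rfl⟩)|⟨i,j,hij,rfl⟩)|⟨i,j,hij,rfl⟩)|
    ⟨i,j,hij,rfl⟩)|⟨i,j,hij,rfl⟩) <;>
  · simp only [σw, ρw, map_mul, map_inv, FreeGroup.lift_apply_of, fφ, Sum.elim_inl, Sum.elim_inr]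
    decide

/-- the abelianization homomorphism to `ℤ²` -/
def φφ : GVB n →* Multiplicative (ℤ × ℤ) := PresentedGroup.toGroup (hrels n)

lemma φ_σ (i : Fin (n-1)) : φφ n (σ n i) = Multiplicative.ofAdd (1,0) :=
  PresentedGroup.toGroup.of _
lemma φ_ρ (i : Fin (n-1)) : φφ n (ρ n i) = Multiplicative.ofAdd (0,1) :=
  PresentedGroup.toGroup.of _

/-- the section of `φφ` -/
def ccφ (g : GVB n) : GVB n :=
  cc n hn (Multiplicative.toAdd (φφ n g)).1 (Multiplicative.toAdd (φφ n g)).2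

lemma cc_zero : cc n hn 0 0 = 1 := by simp [cc]

lemma cc_neg (m k : ℤ) : cc n hn (-m) (-k) = (cc n hn m k)⁻¹ := by
  have h := cc_mul n hn m k (-m) (-k)
  rw [add_neg_cancel, add_neg_cancel, cc_zero] at h
  exact eq_inv_of_mul_eq_one_right h

lemma ccφ_mul (g h : GVB n) : ccφ n hn (g * h) = ccφ n hn g * ccφ n hn h := by
  simp only [ccφ, map_mul, toAdd_mul, Prod.fst_add, Prod.snd_add, cc_mul]

lemma ccφ_inv (g : GVB n) : ccφ n hn g⁻¹ = (ccφ n hn g)⁻¹ := by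
  simp only [ccφ, map_inv, toAdd_inv, Prod.fst_neg, Prod.snd_neg, cc_neg]

lemma Pmul {g h : GVB n} (hg : g * (ccφ n hn g)⁻¹ ∈ HH n hn)
    (hh : h * (ccφ n hn h)⁻¹ ∈ HH n hn) : (g * h) * (ccφ n hn (g * h))⁻¹ ∈ HH n hn := by
  rw [ccφ_mul]
  have e : (g * h) * (ccφ n hn g * ccφ n hn h)⁻¹ =
      (g * (ccφ n hn g)⁻¹) * (ccφ n hn g * (h * (ccφ n hn h)⁻¹) * (ccφ n hn g)⁻¹) := by group
  rw [e]
  refine mul_mem hg ?_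
  exact (Subgroup.mem_normalizer_iff.mp (cc_mem_normalizer n hn _ _) _).mp hh

lemma Pinv {g : GVB n} (hg : g * (ccφ n hn g)⁻¹ ∈ HH n hn) :
    g⁻¹ * (ccφ n hn g⁻¹)⁻¹ ∈ HH n hn := by
  rw [ccφ_inv, inv_inv]
  have e : g⁻¹ * ccφ n hn g =
      ((ccφ n hn g)⁻¹ * (g * (ccφ n hn g)⁻¹) * ((ccφ n hn g)⁻¹)⁻¹)⁻¹ := by group
  rw [e]
  refine inv_mem ?_
  exact (Subgroup.mem_normalizer_iff.mp (inv_mem (cc_mem_normalizer n hn _ _)) _).mp hg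

lemma cc_one_zero : cc n hn 1 0 = aa n hn := by simp [cc]
lemma cc_zero_one : cc n hn 0 1 = bb n hn := by simp [cc]

lemma mem_xx (i : Fin (n-1)) : xx n hn i ∈ HH n hn := by
  have h := (master n hn i 0 0).1
  rwa [TT_zero] at h

lemma mem_yy (i : Fin (n-1)) : yy n hn i ∈ HH n hn := by
  have h := (master n hn i 0 0).2
  rwa [TT_zero] at h

lemma sec (g : GVB n) : g * (ccφ n hn g)⁻¹ ∈ HH n hn := by
  induction g using PresentedGroup.induction_on with
  | _ w =>
    induction w using FreeGroup.induction_on with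
    | C1 =>
      rw [show PresentedGroup.mk (gvbRels n) 1 = 1 from map_one _]
      have e : ccφ n hn 1 = 1 := by
        simp only [ccφ, map_one]
        rw [show Multiplicative.toAdd (1 : Multiplicative (ℤ × ℤ)) = (0,0) from rfl]
        exact cc_zero n hn
      rw [e]; simpa using one_mem (HH n hn)
    | of x =>
      cases x with
      | inl i =>
        have e : ccφ n hn (PresentedGroup.mk (gvbRels n) (FreeGroup.of (Sum.inl i))) = aa n hn := by
          rw [show PresentedGroup.mk (gvbRels n) (FreeGroup.of (Sum.inl i)) = σ n i from rfl]
          simp only [ccφ, φ_σ, toAdd_ofAdd]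
          exact cc_one_zero n hn
        rw [e]
        exact mem_xx n hn i
      | inr i =>
        have e : ccφ n hn (PresentedGroup.mk (gvbRels n) (FreeGroup.of (Sum.inr i))) = bb n hn := by
          rw [show PresentedGroup.mk (gvbRels n) (FreeGroup.of (Sum.inr i)) = ρ n i from rfl]
          simp only [ccφ, φ_ρ, toAdd_ofAdd]
          exact cc_zero_one n hn
        rw [e]
        exact mem_yy n hn i
    | inv_of x ih =>
      rw [show PresentedGroup.mk (gvbRels n) (FreeGroup.of x)⁻¹ =
        (PresentedGroup.mk (gvbRels n) (FreeGroup.of x))⁻¹ from map_inv _ _]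
      exact Pinv n hn ih
    | mul x y ihx ihy =>
      rw [show PresentedGroup.mk (gvbRels n) (x * y) =
        PresentedGroup.mk (gvbRels n) x * PresentedGroup.mk (gvbRels n) y from map_mul _ _ _]
      exact Pmul n hn ihx ihy

lemma ker_sub (g : GVB n) (hg : φφ n g = 1) : g ∈ HH n hn := by
  have h := sec n hn g
  have e : ccφ n hn g = 1 := by
    simp only [ccφ, hg]
    rw [show Multiplicative.toAdd (1 : Multiplicative (ℤ × ℤ)) = (0,0) from rfl]
    exact cc_zero n hn
  rw [e] at h
  simpa using h

end phi
section final
variable (n : ℕ) (hn : 4 ≤ n)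

open scoped commutatorElement in
lemma conj_mul_inv_mem (g w₁ w₂ : GVB n) :
    (w₁ * g * w₁⁻¹) * (w₂ * g * w₂⁻¹)⁻¹ ∈ commutator (GVB n) := by
  have e : (w₁ * g * w₁⁻¹) * (w₂ * g * w₂⁻¹)⁻¹ = w₁ * ⁅g, w₁⁻¹ * w₂⁆ * w₁⁻¹ := by
    rw [commutatorElement_def]; group
  rw [e]
  have hc : ⁅g, w₁⁻¹ * w₂⁆ ∈ commutator (GVB n) :=
    Subgroup.commutator_mem_commutator (Subgroup.mem_top g) (Subgroup.mem_top _)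
  exact (Subgroup.Normal.conj_mem inferInstance _ hc w₁)

lemma conj_σ0 : ∀ (v : ℕ) (hv : v < n-1),
    ∃ w : GVB n, σ n ⟨v, hv⟩ = w * σ n (i₀ n hn) * w⁻¹ := by
  intro v
  induction v with
  | zero =>
    intro hv
    exact ⟨1, by rw [show (⟨0, hv⟩ : Fin (n-1)) = i₀ n hn from rfl]; group⟩
  | succ v ih =>
    intro hv
    have hv' : v < n - 1 := by omega
    obtain ⟨w, hw⟩ := ih hv'
    have hb := braid_σσ (n := n) ⟨v, hv'⟩ ⟨v+1, hv⟩ rfl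
    have e : σ n ⟨v+1, hv⟩ =
        (σ n ⟨v, hv'⟩ * σ n ⟨v+1, hv⟩) * σ n ⟨v, hv'⟩ * (σ n ⟨v, hv'⟩ * σ n ⟨v+1, hv⟩)⁻¹ := by
      trans (σ n ⟨v, hv'⟩ * σ n ⟨v+1, hv⟩ * σ n ⟨v, hv'⟩) *
        ((σ n ⟨v+1, hv⟩)⁻¹ * (σ n ⟨v, hv'⟩)⁻¹)
      · rw [hb]; group
      · group
    refine ⟨σ n ⟨v, hv'⟩ * σ n ⟨v+1, hv⟩ * w, ?_⟩
    calc σ n ⟨v+1, hv⟩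
        = (σ n ⟨v, hv'⟩ * σ n ⟨v+1, hv⟩) * σ n ⟨v, hv'⟩ * (σ n ⟨v, hv'⟩ * σ n ⟨v+1, hv⟩)⁻¹ := e
      _ = (σ n ⟨v, hv'⟩ * σ n ⟨v+1, hv⟩) * (w * σ n (i₀ n hn) * w⁻¹) *
          (σ n ⟨v, hv'⟩ * σ n ⟨v+1, hv⟩)⁻¹ := by rw [← hw]
      _ = (σ n ⟨v, hv'⟩ * σ n ⟨v+1, hv⟩ * w) * σ n (i₀ n hn) *
          (σ n ⟨v, hv'⟩ * σ n ⟨v+1, hv⟩ * w)⁻¹ := by group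

lemma conj_ρ0 : ∀ (v : ℕ) (hv : v < n-1),
    ∃ w : GVB n, ρ n ⟨v, hv⟩ = w * ρ n (i₀ n hn) * w⁻¹ := by
  intro v
  induction v with
  | zero =>
    intro hv
    exact ⟨1, by rw [show (⟨0, hv⟩ : Fin (n-1)) = i₀ n hn from rfl]; group⟩
  | succ v ih =>
    intro hv
    have hv' : v < n - 1 := by omega
    obtain ⟨w, hw⟩ := ih hv'
    have hb := mixed₁ (n := n) ⟨v, hv'⟩ ⟨v+1, hv⟩ rfl
    -- ρ_v σ_{v+1} σ_v = σ_{v+1} σ_v ρ_{v+1}  ⟹  ρ_{v+1} = (σ_{v+1} σ_v)⁻¹ ρ_v (σ_{v+1} σ_v)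
    have e : ρ n ⟨v+1, hv⟩ =
        (σ n ⟨v+1, hv⟩ * σ n ⟨v, hv'⟩)⁻¹ * ρ n ⟨v, hv'⟩ * (σ n ⟨v+1, hv⟩ * σ n ⟨v, hv'⟩) := by
      trans ((σ n ⟨v, hv'⟩)⁻¹ * (σ n ⟨v+1, hv⟩)⁻¹) *
        (ρ n ⟨v, hv'⟩ * σ n ⟨v+1, hv⟩ * σ n ⟨v, hv'⟩)
      · rw [hb]; group
      · group
    refine ⟨(σ n ⟨v+1, hv⟩ * σ n ⟨v, hv'⟩)⁻¹ * w, ?_⟩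
    calc ρ n ⟨v+1, hv⟩
        = (σ n ⟨v+1, hv⟩ * σ n ⟨v, hv'⟩)⁻¹ * ρ n ⟨v, hv'⟩ * (σ n ⟨v+1, hv⟩ * σ n ⟨v, hv'⟩) := e
      _ = (σ n ⟨v+1, hv⟩ * σ n ⟨v, hv'⟩)⁻¹ * (w * ρ n (i₀ n hn) * w⁻¹) *
          (σ n ⟨v+1, hv⟩ * σ n ⟨v, hv'⟩) := by rw [← hw]
      _ = ((σ n ⟨v+1, hv⟩ * σ n ⟨v, hv'⟩)⁻¹ * w) * ρ n (i₀ n hn) *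
          ((σ n ⟨v+1, hv⟩ * σ n ⟨v, hv'⟩)⁻¹ * w)⁻¹ := by group

lemma xx_mem_commutator (i : Fin (n-1)) : xx n hn i ∈ commutator (GVB n) := by
  obtain ⟨v, hv⟩ := i
  obtain ⟨w, hw⟩ := conj_σ0 n hn v hv
  have e : xx n hn ⟨v, hv⟩ = (w * σ n (i₀ n hn) * w⁻¹) * (1 * σ n (i₀ n hn) * 1⁻¹)⁻¹ := by
    rw [← hw]; simp [xx, aa_def]
  rw [e]
  exact conj_mul_inv_mem n _ _ _

lemma yy_mem_commutator (i : Fin (n-1)) : yy n hn i ∈ commutator (GVB n) := by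
  obtain ⟨v, hv⟩ := i
  obtain ⟨w₁, hw₁⟩ := conj_ρ0 n hn v hv
  obtain ⟨w₂, hw₂⟩ := conj_ρ0 n hn 2 (by omega)
  have e : yy n hn ⟨v, hv⟩ = (w₁ * ρ n (i₀ n hn) * w₁⁻¹) * (w₂ * ρ n (i₀ n hn) * w₂⁻¹)⁻¹ := by
    rw [← hw₁]
    have : bb n hn = ρ n ⟨2, by omega⟩ := rfl
    rw [yy, this, hw₂]
  rw [e]
  exact conj_mul_inv_mem n _ _ _

lemma SS_sub_commutator : SS n hn ⊆ commutator (GVB n) := by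
  rintro s ⟨⟨i, ⟨m, k⟩, tb⟩, ht, rfl⟩
  beta_reduce
  have hnorm : (commutator (GVB n)).Normal := inferInstance
  cases tb
  · exact hnorm.conj_mem _ (yy_mem_commutator n hn i) (cc n hn m k)
  · exact hnorm.conj_mem _ (xx_mem_commutator n hn i) (cc n hn m k)

lemma commutator_eq_HH : commutator (GVB n) = HH n hn := by
  apply le_antisymm
  · intro g hg
    have hker : φφ n g = 1 := Abelianization.commutator_subset_ker (φφ n) hg
    exact ker_sub n hn g hker
  · exact (Subgroup.closure_le _).mpr (SS_sub_commutator n hn)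

end final

end GVBProof



open GenVirtBraid in
/-- For every integer `n ≥ 4`, the commutator subgroup of the generalized virtual braid group
`GVB_n` is finitely generated as a subgroup of `GVB_n`. -/
theorem gvb_commutator_fg (n : ℕ) (hn : 4 ≤ n) : (commutator (GVB n)).FG := by
  rw [Subgroup.fg_iff]
  exact ⟨GVBProof.SS n hn, (GVBProof.commutator_eq_HH n hn).symm, GVBProof.SS_finite n hn⟩
end
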